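/- arXiv:0710.5062 — 2 statements merged into one kernel-verified Lean document; each statement's English description precedes it below -/
import Mathlib

section
/- Let G be an AH-algebra and let g,h ∈ G, with (p_{g,λ})_{λ∈ℝ} the spectral resolution of g. Then hCg if and only if hCp_{g,λ} for all λ ∈ ℝ. -/
/-- An e-ring `(R,E)`: an associative ring `R` with unity together with a set `E ⊆ R`
of effects, satisfying the Foulis axioms.  `E⁺` is realized as the additive submonoid
closure of `E` (the set of all finite sums of effects). -/
structure ERing (R : Type*) [Ring R] where
  E : Set R
  zero_mem : (0 : R) ∈ E
  one_mem : (1 : R) ∈ E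
  compl_mem : ∀ e ∈ E, 1 - e ∈ E
  epos_i : ∀ a ∈ AddSubmonoid.closure E, -a ∈ AddSubmonoid.closure E → a = 0
  epos_ii : ∀ a ∈ AddSubmonoid.closure E, 1 - a ∈ AddSubmonoid.closure E → a ∈ E
  epos_iii : ∀ a ∈ AddSubmonoid.closure E, ∀ b ∈ AddSubmonoid.closure E,
    a * b = b * a → a * b ∈ AddSubmonoid.closure E
  epos_iv : ∀ a ∈ AddSubmonoid.closure E, ∀ b ∈ AddSubmonoid.closure E,
    a * b * a ∈ AddSubmonoid.closure E
  epos_v : ∀ a ∈ AddSubmonoid.closure E, ∀ b ∈ AddSubmonoid.closure E,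
    a * b * a = 0 → a * b = 0 ∧ b * a = 0
  epos_vi : ∀ a ∈ AddSubmonoid.closure E, ∀ b ∈ AddSubmonoid.closure E,
    (a - b) ^ 2 ∈ AddSubmonoid.closure E
  zero_ne_one : (0 : R) ≠ 1

namespace ERing

variable {R : Type*} [Ring R] (er : ERing R)

/-- `E⁺`, the set of all finite sums of effects; the positive cone of the directed group. -/
def Epos : Set R := (AddSubmonoid.closure er.E : Set R)

/-- The directed group `G = E⁺ - E⁺` of the e-ring. -/
def G : Set R := {g | ∃ a ∈ er.Epos, ∃ b ∈ er.Epos, g = a - b}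

/-- The partial order on the directed group: `g ≤ h` iff `h - g ∈ E⁺`. -/
def le (g h : R) : Prop := h - g ∈ er.Epos

/-- The set of projections `P = {p ∈ G : p = p²}`. -/
def P : Set R := {p | p ∈ er.G ∧ p = p ^ 2}

/-- The commutant in `G` of a subset `A ⊆ G`. -/
def commutant (A : Set R) : Set R := {g | g ∈ er.G ∧ ∀ a ∈ A, g * a = a * g}

/-- The bicommutant in `G` of a subset `A ⊆ G`. -/
def CC (A : Set R) : Set R := er.commutant (er.commutant A)

/-- `s` is the supremum of `A` within the subset `S` (w.r.t. the e-ring order). -/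
def IsSupIn (S A : Set R) (s : R) : Prop :=
  s ∈ S ∧ (∀ a ∈ A, er.le a s) ∧ ∀ b ∈ S, (∀ a ∈ A, er.le a b) → er.le s b

/-- `s` is the infimum of `A` within the subset `S` (w.r.t. the e-ring order). -/
def IsInfIn (S A : Set R) (s : R) : Prop :=
  s ∈ S ∧ (∀ a ∈ A, er.le s a) ∧ ∀ b ∈ S, (∀ a ∈ A, er.le b a) → er.le b s

/-- Quadratic annihilation property. -/
def HasQA : Prop := ∀ g ∈ er.G, ∀ h ∈ er.G, g * h ^ 2 * g = 0 → g * h = 0 ∧ h * g = 0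

/-- Commutative Vigier property: every ascending sequence of pairwise commuting elements
of `G` bounded above in `G` has a supremum in `G` which double commutes with the sequence. -/
def HasCV : Prop :=
  ∀ g : ℕ → R, (∀ n, g n ∈ er.G) → (∀ n, er.le (g n) (g (n + 1))) →
    (∀ m n, g m * g n = g n * g m) → (∃ b ∈ er.G, ∀ n, er.le (g n) b) →
    ∃ s, er.IsSupIn er.G (Set.range g) s ∧ s ∈ er.CC (Set.range g)

/-- `G` is an abstract Hermitian (AH) algebra: there is a semitransparent effect `½`,
`G` has quadratic annihilation, and `G` has the commutative Vigier property. -/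
def IsAH : Prop := (∃ h ∈ er.E, h + h = 1) ∧ er.HasQA ∧ er.HasCV

end ERing

namespace ERing

variable {R : Type*} [Ring R] (er : ERing R)

/-- `m` is the absolute value `|g| = (g²)^(1/2)` of `g`: `m ∈ G`, `0 ≤ m`, `m² = g²`. -/
def IsAbs (g m : R) : Prop := m ∈ er.G ∧ er.le 0 m ∧ m ^ 2 = g ^ 2

/-- `a` is the positive part `g⁺ = ½(|g| + g)` of `g`, i.e. `a ∈ G` and `a + a = |g| + g`. -/
def IsPosPart (g a : R) : Prop := a ∈ er.G ∧ ∃ m, er.IsAbs g m ∧ a + a = m + g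

/-- `b` is the negative part `g⁻ = ½(|g| − g)` of `g`, i.e. `b ∈ G` and `b + b = |g| − g`. -/
def IsNegPart (g b : R) : Prop := b ∈ er.G ∧ ∃ m, er.IsAbs g m ∧ b + b = m - g

/-- `p` is the carrier projection `g°` of `g`. -/
def IsCarrier (g p : R) : Prop := p ∈ er.P ∧ ∀ h ∈ er.G, (g * h = 0 ↔ p * h = 0)

end ERing

namespace ERing

variable {R : Type*} [Ring R] [Algebra ℝ R] (er : ERing R)

/-- The 1-norm `‖g‖ = inf {λ : 0 ≤ λ, −λ·1 ≤ g ≤ λ·1}`. -/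
noncomputable def norm1 (g : R) : ℝ :=
  sInf {l : ℝ | 0 ≤ l ∧ er.le (-(l • (1 : R))) g ∧ er.le g (l • (1 : R))}

/-- The spectral lower bound `L_g = sup {λ : λ·1 ≤ g}`. -/
noncomputable def specL (g : R) : ℝ := sSup {l : ℝ | er.le (l • (1 : R)) g}

/-- The spectral upper bound `U_g = inf {λ : g ≤ λ·1}`. -/
noncomputable def specU (g : R) : ℝ := sInf {l : ℝ | er.le g (l • (1 : R))}

/-- `p` is the spectral projection `p_{g,λ} = 1 − ((g − λ·1)⁺)°`. -/
def IsSpecProj (g : R) (l : ℝ) (p : R) : Prop :=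
  ∃ a, er.IsPosPart (g - l • (1 : R)) a ∧ ∃ q, er.IsCarrier a q ∧ p = 1 - q

/-- `d` is the λ-eigenprojection `d_{g,λ} = 1 − (g − λ·1)°`. -/
def IsEigenProj (g : R) (l : ℝ) (d : R) : Prop :=
  ∃ q, er.IsCarrier (g - l • (1 : R)) q ∧ d = 1 - q

end ERing


set_option linter.unusedSectionVars false
namespace ERingProof

open ERing

variable {R : Type*} [Ring R] [Algebra ℝ R] {er : ERing R}

/-! ### Basic membership lemmas -/

theorem mem_Epos {a : R} : a ∈ er.Epos ↔ a ∈ AddSubmonoid.closure er.E := Iff.rfl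

theorem zero_mem_Epos : (0 : R) ∈ er.Epos := (AddSubmonoid.closure er.E).zero_mem

theorem E_subset_Epos {a : R} (h : a ∈ er.E) : a ∈ er.Epos :=
  AddSubmonoid.subset_closure h

theorem one_mem_Epos : (1 : R) ∈ er.Epos := E_subset_Epos er.one_mem

theorem add_mem_Epos {a b : R} (ha : a ∈ er.Epos) (hb : b ∈ er.Epos) :
    a + b ∈ er.Epos := (AddSubmonoid.closure er.E).add_mem ha hb

theorem smul_mem_Epos (hscal : ∀ l : ℝ, 0 ≤ l → ∀ a ∈ er.Epos, l • a ∈ er.Epos)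
    {l : ℝ} (hl : 0 ≤ l) {a : R} (ha : a ∈ er.Epos) : l • a ∈ er.Epos :=
  hscal l hl a ha

theorem mem_G_iff {x : R} : x ∈ er.G ↔ ∃ a ∈ er.Epos, ∃ b ∈ er.Epos, x = a - b := Iff.rfl

theorem Epos_subset_G {a : R} (ha : a ∈ er.Epos) : a ∈ er.G :=
  ⟨a, ha, 0, zero_mem_Epos, by simp⟩

theorem zero_mem_G : (0 : R) ∈ er.G := Epos_subset_G zero_mem_Epos

theorem one_mem_G : (1 : R) ∈ er.G := Epos_subset_G one_mem_Epos

theorem neg_mem_G {x : R} (hx : x ∈ er.G) : -x ∈ er.G := by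
  obtain ⟨a, ha, b, hb, rfl⟩ := hx
  exact ⟨b, hb, a, ha, by abel⟩

theorem add_mem_G {x y : R} (hx : x ∈ er.G) (hy : y ∈ er.G) : x + y ∈ er.G := by
  obtain ⟨a, ha, b, hb, rfl⟩ := hx
  obtain ⟨c, hc, d, hd, rfl⟩ := hy
  exact ⟨a + c, add_mem_Epos ha hc, b + d, add_mem_Epos hb hd, by abel⟩

theorem sub_mem_G {x y : R} (hx : x ∈ er.G) (hy : y ∈ er.G) : x - y ∈ er.G := by
  rw [sub_eq_add_neg]; exact add_mem_G hx (neg_mem_G hy)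

theorem smul_mem_G (hscal : ∀ l : ℝ, 0 ≤ l → ∀ a ∈ er.Epos, l • a ∈ er.Epos)
    (l : ℝ) {x : R} (hx : x ∈ er.G) : l • x ∈ er.G := by
  rcases le_or_gt 0 l with hl | hl
  · obtain ⟨a, ha, b, hb, rfl⟩ := hx
    exact ⟨l • a, smul_mem_Epos hscal hl ha, l • b, smul_mem_Epos hscal hl hb,
      by rw [smul_sub]⟩
  · obtain ⟨a, ha, b, hb, hne⟩ := neg_mem_G hx
    refine ⟨(-l) • a, smul_mem_Epos hscal (by linarith) ha,
      (-l) • b, smul_mem_Epos hscal (by linarith) hb, ?_⟩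
    rw [← smul_sub, ← hne, smul_neg, neg_smul, neg_neg]

theorem smul_one_mul (l : ℝ) (y : R) : (l • (1 : R)) * y = l • y := by
  rw [smul_mul_assoc, one_mul]

theorem mul_smul_one (l : ℝ) (y : R) : y * (l • (1 : R)) = l • y := by
  rw [mul_smul_comm, mul_one]

theorem smul_one_comm (l : ℝ) (y : R) : (l • (1 : R)) * y = y * (l • (1 : R)) := by
  rw [smul_one_mul, mul_smul_one]

theorem sq_mem_Epos {x : R} (hx : x ∈ er.G) : x * x ∈ er.Epos := by
  obtain ⟨a, ha, b, hb, rfl⟩ := hx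
  have := er.epos_vi a ha b hb
  rwa [pow_two] at this

theorem epos_antisymm {a : R} (h1 : a ∈ er.Epos) (h2 : -a ∈ er.Epos) : a = 0 :=
  er.epos_i a h1 h2

theorem epos_pair {a b : R} (ha : a ∈ er.Epos) (hb : b ∈ er.Epos)
    (hab : a + b = 0) : a = 0 ∧ b = 0 := by
  have h1 : a = 0 := epos_antisymm ha (by rw [neg_eq_of_add_eq_zero_right hab]; exact hb)
  exact ⟨h1, by rw [h1, zero_add] at hab; exact hab⟩

theorem epos_triple {a b c : R} (ha : a ∈ er.Epos) (hb : b ∈ er.Epos)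
    (hc : c ∈ er.Epos) (habc : a + b + c = 0) : a = 0 ∧ b = 0 ∧ c = 0 := by
  have h := epos_pair ha (add_mem_Epos hb hc) (by rw [← habc]; abel)
  have h2 := epos_pair hb hc h.2
  exact ⟨h.1, h2⟩

theorem mul_mem_Epos {a b : R} (ha : a ∈ er.Epos) (hb : b ∈ er.Epos)
    (hab : a * b = b * a) : a * b ∈ er.Epos := er.epos_iii a ha b hb hab

theorem conj_mem_Epos {a b : R} (ha : a ∈ er.Epos) (hb : b ∈ er.Epos) :
    a * b * a ∈ er.Epos := er.epos_iv a ha b hb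

theorem mul_comm_mem_G (hscal : ∀ l : ℝ, 0 ≤ l → ∀ a ∈ er.Epos, l • a ∈ er.Epos)
    {x y : R} (hx : x ∈ er.G) (hy : y ∈ er.G) (hxy : x * y = y * x) :
    x * y ∈ er.G := by
  have key : x * y + x * y = (x + y) * (x + y) - x * x - y * y := by
    rw [add_mul, mul_add, mul_add, ← hxy]; abel
  have h2 : x * y = (1/2 : ℝ) • ((x + y) * (x + y) - x * x - y * y) := by
    rw [← key, ← two_smul ℝ (x*y), smul_smul]; norm_num
  rw [h2]
  exact smul_mem_G hscal _ (sub_mem_G (sub_mem_G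
    (Epos_subset_G (sq_mem_Epos (add_mem_G hx hy)))
    (Epos_subset_G (sq_mem_Epos hx))) (Epos_subset_G (sq_mem_Epos hy)))

theorem qa (hAH : er.IsAH) {x y : R} (hx : x ∈ er.G) (hy : y ∈ er.G)
    (h : x * (y * y) * x = 0) : x * y = 0 ∧ y * x = 0 := by
  apply hAH.2.1 x hx y hy
  rwa [pow_two]

theorem eq_zero_of_sq (hAH : er.IsAH) {x : R} (hx : x ∈ er.G) (h : x * x = 0) :
    x = 0 := by
  have := (qa hAH one_mem_G hx (by rw [one_mul, mul_one]; exact h)).1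
  rwa [one_mul] at this

theorem mul_eq_zero_symm (hAH : er.IsAH) {x y : R} (hx : x ∈ er.G) (hy : y ∈ er.G)
    (h : x * y = 0) : y * x = 0 := by
  have hmem : y * x ∈ er.G := by
    have key : y * x = (x + y) * (x + y) - x * x - y * y := by
      rw [add_mul, mul_add, mul_add, h]; abel
    rw [key]
    exact sub_mem_G (sub_mem_G (Epos_subset_G (sq_mem_Epos (add_mem_G hx hy)))
      (Epos_subset_G (sq_mem_Epos hx))) (Epos_subset_G (sq_mem_Epos hy))
  apply eq_zero_of_sq hAH hmem
  calc y * x * (y * x) = y * (x * y) * x := by noncomm_ring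
  _ = 0 := by rw [h, mul_zero, zero_mul]

theorem exists_bound_Epos {a : R} (ha : a ∈ er.Epos) :
    ∃ t : ℝ, 0 ≤ t ∧ t • (1 : R) - a ∈ er.Epos := by
  induction ha using AddSubmonoid.closure_induction with
  | mem x hx => exact ⟨1, zero_le_one, by
      rw [one_smul]; exact E_subset_Epos (er.compl_mem x hx)⟩
  | zero => exact ⟨0, le_refl _, by simpa using zero_mem_Epos⟩
  | add x y _ _ hx hy =>
      obtain ⟨t, ht, hmt⟩ := hx
      obtain ⟨s, hs, hms⟩ := hy
      exact ⟨t + s, by linarith, by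
        have : (t + s) • (1 : R) - (x + y) = (t • (1:R) - x) + (s • (1:R) - y) := by
          rw [add_smul]; abel
        rw [this]; exact add_mem_Epos hmt hms⟩

theorem exists_bound_G (hscal : ∀ l : ℝ, 0 ≤ l → ∀ a ∈ er.Epos, l • a ∈ er.Epos)
    {x : R} (hx : x ∈ er.G) :
    ∃ t : ℝ, 0 ≤ t ∧ t • (1 : R) - x ∈ er.Epos ∧ t • (1 : R) + x ∈ er.Epos := by
  obtain ⟨a, ha, b, hb, rfl⟩ := hx
  obtain ⟨t, ht, hmt⟩ := exists_bound_Epos (er := er) ha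
  obtain ⟨s, hs, hms⟩ := exists_bound_Epos (er := er) hb
  refine ⟨t + s, by linarith, ?_, ?_⟩
  · have h2 : (t + s) • (1 : R) - (a - b) = ((t • (1:R) - a) + b) + s • (1:R) := by
      rw [add_smul]; abel
    rw [h2]
    exact add_mem_Epos (add_mem_Epos hmt hb) (smul_mem_Epos hscal hs one_mem_Epos)
  · have h2 : (t + s) • (1 : R) + (a - b) = ((s • (1:R) - b) + a) + t • (1:R) := by
      rw [add_smul]; abel
    rw [h2]
    exact add_mem_Epos (add_mem_Epos hms ha) (smul_mem_Epos hscal ht one_mem_Epos)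

end ERingProof
namespace ERingProof

variable {R : Type*} [Ring R] [Algebra ℝ R] {er : ERing R}

/-- Wrapper for the commutative Vigier property. -/
theorem vigier (hAH : er.IsAH) (f : ℕ → R) (h1 : ∀ n, f n ∈ er.G)
    (h2 : ∀ n, f (n + 1) - f n ∈ er.Epos)
    (h3 : ∀ m n, f m * f n = f n * f m)
    (b : R) (hb : b ∈ er.G) (hub : ∀ n, b - f n ∈ er.Epos) :
    ∃ s, s ∈ er.G ∧ (∀ n, s - f n ∈ er.Epos) ∧
      (∀ c, c ∈ er.G → (∀ n, c - f n ∈ er.Epos) → c - s ∈ er.Epos) ∧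
      (∀ h, h ∈ er.G → (∀ n, h * f n = f n * h) → s * h = h * s) := by
  obtain ⟨s, hsup, hcc⟩ := hAH.2.2 f h1 (fun n => h2 n) h3 ⟨b, hb, fun n => hub n⟩
  obtain ⟨hsG, hsub, hslub⟩ := hsup
  refine ⟨s, hsG, fun n => hsub (f n) ⟨n, rfl⟩, ?_, ?_⟩
  · intro c hcG hc
    exact hslub c hcG (fun a ⟨n, hn⟩ => hn ▸ hc n)
  · intro h hG hcomm
    exact hcc.2 h ⟨hG, fun a ha => by obtain ⟨n, hn⟩ := ha; rw [← hn]; exact hcomm n⟩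

/-- Archimedean property: an element squeezed by all `ε•1` vanishes. -/
theorem arch (hAH : er.IsAH) (hscal : ∀ l : ℝ, 0 ≤ l → ∀ a ∈ er.Epos, l • a ∈ er.Epos)
    {c : R} (hc : c ∈ er.G)
    (hsq : ∀ ε : ℝ, 0 < ε → ε • (1 : R) - c ∈ er.Epos ∧ ε • (1 : R) + c ∈ er.Epos) :
    c = 0 := by
  have hcsq : c * c ∈ er.Epos := sq_mem_Epos hc
  -- ε•1 - c*c ∈ Epos for all ε > 0
  have key : ∀ ε : ℝ, 0 < ε → ε • (1 : R) - c * c ∈ er.Epos := by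
    intro ε hε
    set d := Real.sqrt ε with hd
    have hd0 : 0 < d := Real.sqrt_pos.mpr hε
    obtain ⟨hA, hB⟩ := hsq d hd0
    have hdd : d * d = ε := Real.mul_self_sqrt hε.le
    have expand : (d • (1 : R) - c) * (d • (1 : R) + c) = ε • (1 : R) - c * c := by
      simp only [sub_mul, mul_add, add_mul, mul_sub, smul_one_mul, mul_smul_one,
        smul_add, smul_sub, smul_smul, hdd]
      abel
    have expand2 : (d • (1 : R) + c) * (d • (1 : R) - c) = ε • (1 : R) - c * c := by
      simp only [sub_mul, mul_add, add_mul, mul_sub, smul_one_mul, mul_smul_one,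
        smul_add, smul_sub, smul_smul, hdd]
      abel
    have := mul_mem_Epos hA hB (by rw [expand, expand2])
    rwa [expand] at this
  -- Vigier on n • (c*c)
  have hfG : ∀ n : ℕ, ((n : ℝ)) • (c * c) ∈ er.G :=
    fun n => smul_mem_G hscal _ (Epos_subset_G hcsq)
  have hasc : ∀ n : ℕ, ((n + 1 : ℕ) : ℝ) • (c * c) - ((n : ℝ)) • (c * c) ∈ er.Epos := by
    intro n
    have : ((n + 1 : ℕ) : ℝ) • (c * c) - ((n : ℝ)) • (c * c) = c * c := by
      push_cast
      rw [add_smul, one_smul]; abel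
    rw [this]; exact hcsq
  have hcomm : ∀ m n : ℕ, ((m : ℝ)) • (c * c) * (((n : ℝ)) • (c * c)) =
      ((n : ℝ)) • (c * c) * (((m : ℝ)) • (c * c)) := by
    intro m n
    rw [smul_mul_assoc, smul_mul_assoc, mul_smul_comm, mul_smul_comm, smul_smul, smul_smul,
      mul_comm (m : ℝ)]
  have hub : ∀ n : ℕ, (1 : R) - ((n : ℝ)) • (c * c) ∈ er.Epos := by
    intro n
    rcases Nat.eq_zero_or_pos n with h0 | hpos
    · subst h0; simpa using one_mem_Epos (er := er)
    · have hn : (0 : ℝ) < n := by exact_mod_cast hpos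
      have h1 := key (1 / n) (by positivity)
      have := smul_mem_Epos hscal hn.le h1
      rwa [smul_sub, smul_smul, mul_one_div, div_self hn.ne', one_smul] at this
  obtain ⟨s, hsG, hsge, hslub, _⟩ := vigier hAH (fun n => ((n : ℝ)) • (c * c))
    hfG hasc hcomm 1 one_mem_G hub
  have hub2 : ∀ n : ℕ, (s - c * c) - ((n : ℝ)) • (c * c) ∈ er.Epos := by
    intro n
    have := hsge (n + 1)
    have he : s - ((n + 1 : ℕ) : ℝ) • (c * c) = (s - c * c) - ((n : ℝ)) • (c * c) := by
      push_cast; rw [add_smul, one_smul]; abel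
    rwa [he] at this
  have hle := hslub (s - c * c) (sub_mem_G hsG (Epos_subset_G hcsq)) hub2
  have hneg : -(c * c) ∈ er.Epos := by
    have : s - c * c - s = -(c * c) := by abel
    rwa [this] at hle
  have := epos_antisymm hcsq hneg
  exact eq_zero_of_sq hAH hc this

end ERingProof
namespace ERingProof

variable {R : Type*} [Ring R] [Algebra ℝ R] {er : ERing R}

theorem half_add_self (y : R) : (1/2 : ℝ) • (y + y) = y := by
  rw [← two_smul ℝ y, smul_smul]; norm_num

/-- Square roots of elements `0 ≤ c ≤ 1`. -/
theorem sqrt01 (hAH : er.IsAH) (hscal : ∀ l : ℝ, 0 ≤ l → ∀ a ∈ er.Epos, l • a ∈ er.Epos)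
    {c : R} (hcG : c ∈ er.G) (hc : c ∈ er.Epos) (hc1 : 1 - c ∈ er.Epos) :
    ∃ s, s ∈ er.Epos ∧ 1 - s ∈ er.Epos ∧ s * s = c ∧
      ∀ h ∈ er.G, h * c = c * h → h * s = s * h := by
  let f : ℕ → R := fun n => Nat.rec 0 (fun _ s => s + (1/2 : ℝ) • (c - s * s)) n
  have f0 : f 0 = 0 := rfl
  have fs : ∀ n, f (n + 1) = f n + (1/2 : ℝ) • (c - f n * f n) := fun n => rfl
  -- commutation with f n
  have hcomm : ∀ x : R, x * c = c * x → ∀ n, x * f n = f n * x := by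
    intro x hx n
    induction n with
    | zero => rw [f0, mul_zero, zero_mul]
    | succ n ih =>
        have h2 : x * (f n * f n) = (f n * f n) * x := by
          rw [← mul_assoc, ih, mul_assoc, ih, mul_assoc]
        rw [fs, mul_add, add_mul, ih, mul_smul_comm, smul_mul_assoc, mul_sub, sub_mul,
          hx, h2]
  have selfc : ∀ n, c * f n = f n * c := hcomm c rfl
  have ffcomm : ∀ m n, f m * f n = f n * f m := fun m n => hcomm (f m) (selfc m).symm n
  -- the inductive invariant
  have inv : ∀ n, f n ∈ er.Epos ∧ (1 - f n) ∈ er.Epos ∧ (c - f n * f n) ∈ er.Epos := by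
    intro n
    induction n with
    | zero =>
        refine ⟨by rw [f0]; exact zero_mem_Epos, by rw [f0, sub_zero]; exact one_mem_Epos, ?_⟩
        rw [f0, mul_zero, sub_zero]; exact hc
    | succ n ih =>
        obtain ⟨h1, h2, h3⟩ := ih
        set s := f n with hsdef
        set u := (1/2 : ℝ) • (c - s * s) with hudef
        have hu : u ∈ er.Epos := smul_mem_Epos hscal (by norm_num) h3
        have hsG : s ∈ er.G := Epos_subset_G h1
        have hcs : c * s = s * c := selfc n
        have hus : u * s = s * u := by
          rw [hudef, smul_mul_assoc, mul_smul_comm]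
          congr 1
          rw [sub_mul, mul_sub, hcs, mul_assoc]
        have hfn1 : f (n + 1) = s + u := fs n
        have hB : 1 - f (n + 1) ∈ er.Epos := by
          have e1 : (1 - s) * (1 - s) + (1 - c) = ((1:R) + 1) - (s + s) - (c - s * s) := by
            noncomm_ring
          have e2 : 1 - f (n + 1) = (1/2 : ℝ) • ((1 - s) * (1 - s) + (1 - c)) := by
            rw [e1, smul_sub, smul_sub, half_add_self, half_add_self, hfn1]
            abel
          rw [e2]
          exact smul_mem_Epos hscal (by norm_num)
            (add_mem_Epos (sq_mem_Epos (sub_mem_G one_mem_G hsG)) hc1)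
        refine ⟨by rw [hfn1]; exact add_mem_Epos h1 hu, hB, ?_⟩
        have e4 : u + u = c - s * s := by
          rw [hudef, ← two_smul ℝ ((1/2 : ℝ) • (c - s * s)), smul_smul]; norm_num
        have e2 : c - f (n + 1) * f (n + 1) = (c - s * s) - (s * u + u * s) - u * u := by
          rw [hfn1]; noncomm_ring
        have e3 : u * (1 - s) + u * (1 - f (n + 1)) = (u + u) - (u * s + u * s) - u * u := by
          rw [hfn1]; noncomm_ring
        have e5 : c - f (n + 1) * f (n + 1) = u * (1 - s) + u * (1 - f (n + 1)) := by
          rw [e2, e3, e4]; simp only [hus]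
        rw [e5]
        have c1 : u * (1 - s) ∈ er.Epos := by
          apply mul_mem_Epos hu h2
          rw [mul_sub, sub_mul, mul_one, one_mul, hus]
        have c2 : u * (1 - f (n + 1)) ∈ er.Epos := by
          apply mul_mem_Epos hu hB
          have : u * f (n + 1) = f (n + 1) * u := by
            rw [hfn1, mul_add, add_mul, hus]
          rw [mul_sub, sub_mul, mul_one, one_mul, this]
        exact add_mem_Epos c1 c2
  -- Vigier
  have hfG : ∀ n, f n ∈ er.G := fun n => Epos_subset_G (inv n).1
  have hasc : ∀ n, f (n + 1) - f n ∈ er.Epos := by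
    intro n
    rw [fs]
    have : f n + (1/2 : ℝ) • (c - f n * f n) - f n = (1/2 : ℝ) • (c - f n * f n) := by abel
    rw [this]
    exact smul_mem_Epos hscal (by norm_num) (inv n).2.2
  obtain ⟨s, hsG, hsge, hslub, hscomm⟩ :=
    vigier hAH f hfG hasc ffcomm 1 one_mem_G (fun n => (inv n).2.1)
  have hs0 : s ∈ er.Epos := by have := hsge 0; rwa [f0, sub_zero] at this
  have hs1 : 1 - s ∈ er.Epos := hslub 1 one_mem_G (fun n => (inv n).2.1)
  have hsfn : ∀ n, s * f n = f n * s := fun n => hscomm (f n) (hfG n) (fun m => ffcomm n m)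
  have hsc : s * c = c * s := hscomm c hcG selfc
  set dd := c - s * s with hdd
  have hddG : dd ∈ er.G := sub_mem_G hcG (Epos_subset_G (sq_mem_Epos (Epos_subset_G hs0)))
  have hsq_diff : ∀ n, s * s - f n * f n = (s - f n) * (s + f n) := by
    intro n
    rw [sub_mul, mul_add, mul_add, hsfn]
    abel
  have hsq_mem : ∀ n, s * s - f n * f n ∈ er.Epos := by
    intro n
    rw [hsq_diff n]
    apply mul_mem_Epos (hsge n) (add_mem_Epos hs0 (inv n).1)
    simp only [sub_mul, mul_sub, add_mul, mul_add, hsfn]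
    abel
  have hu2 : ∀ n, c - f n * f n = (2 : ℝ) • (f (n + 1) - f n) := by
    intro n
    rw [fs n, add_sub_cancel_left]
    module
  have hA : ∀ n, (2 : ℝ) • (s - f n) - (c - f n * f n) ∈ er.Epos := by
    intro n
    have : (2 : ℝ) • (s - f n) - (c - f n * f n) = (2 : ℝ) • (s - f (n + 1)) := by
      rw [hu2 n]
      module
    rw [this]
    exact smul_mem_Epos hscal (by norm_num) (hsge (n + 1))
  have hBn : ∀ n, (2 : ℝ) • (s - f n) - (s * s - f n * f n) ∈ er.Epos := by
    intro n
    have e1 : (s - f n) * ((1 - s) + (1 - f n)) =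
        (s - f n) + (s - f n) - (s * s - f n * f n) := by
      simp only [sub_mul, mul_sub, add_mul, mul_add, mul_one, one_mul, hsfn]
      abel
    have e2 : (2 : ℝ) • (s - f n) - (s * s - f n * f n) =
        (s - f n) * ((1 - s) + (1 - f n)) := by
      rw [e1]; module
    rw [e2]
    apply mul_mem_Epos (hsge n) (add_mem_Epos hs1 (inv n).2.1)
    simp only [sub_mul, mul_sub, add_mul, mul_add, mul_one, one_mul, hsfn]
    abel
  have hupper : (s - (1/2 : ℝ) • dd) - s ∈ er.Epos := by
    apply hslub _ (sub_mem_G hsG (smul_mem_G hscal _ hddG))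
    intro n
    have key : (s - (1/2 : ℝ) • dd) - f n =
        (1/2 : ℝ) • (((2 : ℝ) • (s - f n) - (c - f n * f n)) + (s * s - f n * f n)) := by
      rw [hdd]
      module
    rw [key]
    exact smul_mem_Epos hscal (by norm_num) (add_mem_Epos (hA n) (hsq_mem n))
  have hlower : (s + (1/2 : ℝ) • dd) - s ∈ er.Epos := by
    apply hslub _ (add_mem_G hsG (smul_mem_G hscal _ hddG))
    intro n
    have key : (s + (1/2 : ℝ) • dd) - f n =
        (1/2 : ℝ) • (((2 : ℝ) • (s - f n) - (s * s - f n * f n)) + (c - f n * f n)) := by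
      rw [hdd]
      module
    rw [key]
    exact smul_mem_Epos hscal (by norm_num) (add_mem_Epos (hBn n) (inv n).2.2)
  have hdd_neg : -dd ∈ er.Epos := by
    have h1 : (s - (1/2 : ℝ) • dd) - s = -((1/2 : ℝ) • dd) := by abel
    rw [h1] at hupper
    have := smul_mem_Epos hscal (by norm_num : (0:ℝ) ≤ 2) hupper
    rwa [smul_neg, smul_smul, show (2 : ℝ) * (1/2) = 1 by norm_num, one_smul] at this
  have hdd_pos : dd ∈ er.Epos := by
    have h1 : (s + (1/2 : ℝ) • dd) - s = (1/2 : ℝ) • dd := by abel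
    rw [h1] at hlower
    have := smul_mem_Epos hscal (by norm_num : (0:ℝ) ≤ 2) hlower
    rwa [smul_smul, show (2 : ℝ) * (1/2) = 1 by norm_num, one_smul] at this
  have hddz : dd = 0 := epos_antisymm hdd_pos hdd_neg
  have hss : s * s = c := by
    have h0 : c - s * s = 0 := hddz
    rw [sub_eq_zero] at h0
    exact h0.symm
  refine ⟨s, hs0, hs1, hss, ?_⟩
  intro h hG hhc
  exact (hscomm h hG (fun n => hcomm h hhc n)).symm

/-- Square roots of arbitrary positive elements. -/
theorem sqrt (hAH : er.IsAH) (hscal : ∀ l : ℝ, 0 ≤ l → ∀ a ∈ er.Epos, l • a ∈ er.Epos)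
    {c : R} (hc : c ∈ er.Epos) :
    ∃ s, s ∈ er.Epos ∧ s * s = c ∧
      ∀ h ∈ er.G, h * c = c * h → h * s = s * h := by
  obtain ⟨t, ht, htb⟩ := exists_bound_Epos (er := er) hc
  set M := t + 1 with hM
  have hM1 : (1 : ℝ) ≤ M := by linarith
  have hM0 : (0 : ℝ) < M := by linarith
  set c' := M⁻¹ • c with hc'
  have hc'E : c' ∈ er.Epos := smul_mem_Epos hscal (by positivity) hc
  have hc'1 : 1 - c' ∈ er.Epos := by
    have hMc : M • (1 : R) - c ∈ er.Epos := by
      have : M • (1 : R) - c = (t • (1 : R) - c) + 1 := by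
        rw [hM, add_smul, one_smul]; abel
      rw [this]
      exact add_mem_Epos htb one_mem_Epos
    have := smul_mem_Epos hscal (by positivity : (0:ℝ) ≤ M⁻¹) hMc
    rwa [smul_sub, smul_smul, inv_mul_cancel₀ hM0.ne', one_smul] at this
  obtain ⟨s', hs'E, hs'1, hs'sq, hs'comm⟩ := sqrt01 hAH hscal (Epos_subset_G hc'E) hc'E hc'1
  refine ⟨(Real.sqrt M) • s', smul_mem_Epos hscal (Real.sqrt_nonneg M) hs'E, ?_, ?_⟩
  · rw [smul_mul_assoc, mul_smul_comm, smul_smul, Real.mul_self_sqrt hM0.le, hs'sq,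
      hc', smul_smul, mul_inv_cancel₀ hM0.ne', one_smul]
  · intro h hG hhc
    have hhc' : h * c' = c' * h := by
      rw [hc', mul_smul_comm, smul_mul_assoc, hhc]
    rw [mul_smul_comm, smul_mul_assoc, hs'comm h hG hhc']

end ERingProof
namespace ERingProof

variable {R : Type*} [Ring R] [Algebra ℝ R] {er : ERing R}

/-- Normalization of a positive element below `1`. -/
theorem normalize (hscal : ∀ l : ℝ, 0 ≤ l → ∀ a ∈ er.Epos, l • a ∈ er.Epos)
    {a : R} (ha : a ∈ er.Epos) :
    ∃ (b : R) (γ : ℝ), 0 < γ ∧ a = γ • b ∧ b ∈ er.Epos ∧ 1 - b ∈ er.Epos := by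
  obtain ⟨t0, ht0, htb⟩ := exists_bound_Epos (er := er) ha
  refine ⟨(t0 + 1)⁻¹ • a, t0 + 1, by linarith, ?_, smul_mem_Epos hscal (by positivity) ha, ?_⟩
  · rw [smul_smul, mul_inv_cancel₀ (by positivity : (t0+1:ℝ) ≠ 0), one_smul]
  · have hMc : (t0 + 1) • (1 : R) - a ∈ er.Epos := by
      have : (t0 + 1) • (1 : R) - a = (t0 • (1 : R) - a) + 1 := by
        rw [add_smul, one_smul]; abel
      rw [this]; exact add_mem_Epos htb one_mem_Epos
    have := smul_mem_Epos hscal (by positivity : (0:ℝ) ≤ (t0+1)⁻¹) hMc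
    rwa [smul_sub, smul_smul, inv_mul_cancel₀ (by positivity : (t0+1:ℝ) ≠ 0), one_smul] at this

/-- Carrier projections of positive elements. -/
theorem carrier (hAH : er.IsAH) (hscal : ∀ l : ℝ, 0 ≤ l → ∀ a ∈ er.Epos, l • a ∈ er.Epos)
    {c : R} (hc : c ∈ er.Epos) :
    ∃ e, e ∈ er.Epos ∧ 1 - e ∈ er.Epos ∧ e * e = e ∧
      (∀ h ∈ er.G, (c * h = 0 ↔ e * h = 0)) ∧
      (∀ h ∈ er.G, h * c = c * h → h * e = e * h) ∧ c * e = c ∧ e * c = c := by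
  obtain ⟨c', M, hM0, hcc', hc'E, hc'1⟩ := normalize hscal hc
  have hc'G : c' ∈ er.G := Epos_subset_G hc'E
  -- commuting with c iff with c'
  have hcomm_iff : ∀ x : R, x * c = c * x ↔ x * c' = c' * x := by
    intro x
    constructor
    · intro h
      have hc'c : c' = M⁻¹ • c := by
        rw [hcc', smul_smul, inv_mul_cancel₀ hM0.ne', one_smul]
      rw [hc'c, mul_smul_comm, h, smul_mul_assoc]
    · intro h; rw [hcc', mul_smul_comm, smul_mul_assoc, h]
  set t : R := 1 - c' with htdef
  have htE : t ∈ er.Epos := hc'1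
  have htG : t ∈ er.G := Epos_subset_G htE
  have htc' : t * c' = c' * t := by rw [htdef, sub_mul, mul_sub, one_mul, mul_one]
  have htpowE : ∀ n : ℕ, t ^ n ∈ er.Epos := by
    intro n
    induction n with
    | zero => rw [pow_zero]; exact one_mem_Epos
    | succ n ih =>
        rw [pow_succ]
        exact mul_mem_Epos ih htE ((Commute.refl t).pow_left n).eq
  have htpow_comm : ∀ x : R, x * t = t * x → ∀ n, x * t ^ n = t ^ n * x :=
    fun x hx n => (Commute.pow_right hx n)
  set f : ℕ → R := fun n => 1 - t ^ n with hfdef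
  have hrec : ∀ n, f (n + 1) = f n + t ^ n * c' := by
    intro n
    show 1 - t ^ (n+1) = (1 - t ^ n) + t ^ n * c'
    rw [pow_succ, htdef, mul_sub, mul_one]; abel
  have hfE : ∀ n, f n ∈ er.Epos := by
    intro n
    induction n with
    | zero => show 1 - t ^ 0 ∈ er.Epos; rw [pow_zero, sub_self]; exact zero_mem_Epos
    | succ n ih =>
        rw [hrec]
        exact add_mem_Epos ih
          (mul_mem_Epos (htpowE n) hc'E (htpow_comm c' htc'.symm n).symm)
  have hf1 : ∀ n, 1 - f n ∈ er.Epos := by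
    intro n; show 1 - (1 - t ^ n) ∈ er.Epos
    rw [sub_sub_cancel]; exact htpowE n
  have hfG : ∀ n, f n ∈ er.G := fun n => Epos_subset_G (hfE n)
  have hfasc : ∀ n, f (n + 1) - f n ∈ er.Epos := by
    intro n
    rw [hrec, add_sub_cancel_left]
    exact mul_mem_Epos (htpowE n) hc'E (htpow_comm c' htc'.symm n).symm
  have hfcomm : ∀ x : R, x * c = c * x → ∀ n, x * f n = f n * x := by
    intro x hx n
    have hxc' : x * c' = c' * x := (hcomm_iff x).mp hx
    have hxt : x * t = t * x := by rw [htdef, mul_sub, sub_mul, mul_one, one_mul, hxc']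
    show x * (1 - t ^ n) = (1 - t ^ n) * x
    rw [mul_sub, sub_mul, mul_one, one_mul, htpow_comm x hxt n]
  have hffcomm : ∀ m n, f m * f n = f n * f m := by
    intro m n
    apply hfcomm (f m) _ n
    exact (hfcomm c rfl m).symm
  obtain ⟨e, heG, hege, helub, hecomm⟩ := vigier hAH f hfG hfasc hffcomm 1 one_mem_G hf1
  have hf00 : f 0 = 0 := by show 1 - t ^ 0 = 0; rw [pow_zero, sub_self]
  have he0 : e ∈ er.Epos := by
    have := hege 0
    rwa [hf00, sub_zero] at this
  have he1 : 1 - e ∈ er.Epos := helub 1 one_mem_G hf1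
  have hec : ∀ h ∈ er.G, h * c = c * h → h * e = e * h := by
    intro h hG hx
    exact (hecomm h hG (fun n => hfcomm h hx n)).symm
  have hece : c * e = e * c := hec c (Epos_subset_G hc) rfl
  have hec' : c' * e = e * c' := by
    have := (hcomm_iff e).mp hece.symm
    exact this.symm
  -- idempotency of e
  have hf2asc : ∀ n, f (n+1) * f (n+1) - f n * f n ∈ er.Epos := by
    intro n
    have he : f (n+1) * f (n+1) - f n * f n = (f (n+1) - f n) * (f (n+1) + f n) := by
      simp only [sub_mul, mul_add, add_mul, hffcomm n (n+1)]
      abel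
    rw [he]
    exact mul_mem_Epos (hfasc n) (add_mem_Epos (hfE (n+1)) (hfE n))
      (by simp only [sub_mul, mul_add, add_mul, mul_sub, hffcomm n (n+1)]; abel)
  have hf2ub : ∀ n, 1 - f n * f n ∈ er.Epos := by
    intro n
    have he : 1 - f n * f n = (1 - f n) * (1 + f n) := by
      simp only [sub_mul, mul_add, add_mul, mul_one, one_mul]; abel
    rw [he]
    exact mul_mem_Epos (hf1 n) (add_mem_Epos one_mem_Epos (hfE n))
      (by simp only [sub_mul, mul_add, add_mul, mul_sub, mul_one, one_mul]; abel)
  obtain ⟨e2, he2G, he2ge, he2lub, _⟩ := vigier hAH (fun n => f n * f n)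
    (fun n => Epos_subset_G (sq_mem_Epos (hfG n)))
    hf2asc
    (fun m n => by
      have hcmn : Commute (f m) (f n) := hffcomm m n
      exact ((hcmn.mul_left hcmn).mul_right (hcmn.mul_left hcmn)).eq)
    1 one_mem_G hf2ub
  have hdbl : ∀ n, f (2 * n) = (2:ℝ) • f n - f n * f n := by
    intro n
    show 1 - t ^ (2*n) = (2:ℝ) • (1 - t ^ n) - (1 - t ^ n) * (1 - t ^ n)
    have h2 : t ^ (2*n) = t ^ n * t ^ n := by rw [two_mul, pow_add]
    rw [h2]
    simp only [sub_mul, mul_sub, mul_one, one_mul]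
    module
  have he_le_e2 : e2 - e ∈ er.Epos := by
    have hmid : ∀ n, (1/2:ℝ) • (e + e2) - f n ∈ er.Epos := by
      intro n
      have key : (1/2:ℝ) • (e + e2) - f n =
          (1/2:ℝ) • ((e - f (2*n)) + (e2 - f n * f n)) := by
        rw [hdbl n]; module
      rw [key]
      exact smul_mem_Epos hscal (by norm_num) (add_mem_Epos (hege (2*n)) (he2ge n))
    have h3 := helub ((1/2:ℝ) • (e + e2))
      (smul_mem_G hscal _ (add_mem_G heG he2G)) hmid
    have h4 : e2 - e = (2:ℝ) • ((1/2:ℝ) • (e + e2) - e) := by module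
    rw [h4]
    exact smul_mem_Epos hscal (by norm_num) h3
  have hefn : ∀ n, e * f n = f n * e :=
    fun n => hecomm (f n) (hfG n) (fun m => hffcomm n m)
  have he2_le : e * e - e2 ∈ er.Epos := by
    apply he2lub (e * e) (Epos_subset_G (sq_mem_Epos heG))
    intro n
    have he : e * e - f n * f n = (e - f n) * (e + f n) := by
      simp only [sub_mul, mul_add, add_mul, hefn]
      abel
    rw [he]
    exact mul_mem_Epos (hege n) (add_mem_Epos he0 (hfE n))
      (by simp only [sub_mul, mul_add, add_mul, mul_sub, hefn]; abel)
  have hesq_le : e - e * e ∈ er.Epos := by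
    have := mul_mem_Epos he0 he1
      (by rw [mul_sub, sub_mul, mul_one, one_mul])
    rwa [mul_sub, mul_one] at this
  have heidem : e * e = e := by
    have hge : e * e - e ∈ er.Epos := by
      have : e * e - e = (e * e - e2) + (e2 - e) := by abel
      rw [this]; exact add_mem_Epos he2_le he_le_e2
    have h0 := epos_antisymm hge (by rwa [neg_sub])
    rw [sub_eq_zero] at h0; exact h0
  -- c' ≤ e and c e = c
  have hc'le : e - c' ∈ er.Epos := by
    have := hege 1
    have h1 : f 1 = c' := by show 1 - t ^ 1 = c'; rw [pow_one, htdef, sub_sub_cancel]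
    rwa [h1] at this
  have hc'e : c' * e = c' := by
    have z1 : c' * (1 - e) ∈ er.Epos := mul_mem_Epos hc'E he1
      (by rw [mul_sub, sub_mul, mul_one, one_mul, hec'])
    have z2 : (e - c') * (1 - e) ∈ er.Epos := mul_mem_Epos hc'le he1
      (by simp only [sub_mul, mul_sub, mul_one, one_mul, hec']; abel)
    have hsum : c' * (1 - e) + (e - c') * (1 - e) = 0 := by
      rw [← add_mul, add_sub_cancel, mul_sub, mul_one, heidem, sub_self]
    have := (epos_pair z1 z2 hsum).1
    rw [mul_sub, mul_one, sub_eq_zero] at this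
    exact this.symm
  have hce : c * e = c := by
    rw [hcc', smul_mul_assoc, hc'e]
  have hecr : e * c = c := by rw [← hece, hce]
  refine ⟨e, he0, he1, heidem, ?_, hec, hce, hecr⟩
  intro h hG
  constructor
  · -- c * h = 0 → e * h = 0
    intro hch
    have hc'h : c' * h = 0 := by
      have := congrArg (fun y => M⁻¹ • y) hch
      simp only [smul_zero] at this
      rw [hcc', smul_mul_assoc, smul_smul, inv_mul_cancel₀ hM0.ne', one_smul] at this
      exact this
    obtain ⟨σ, hσE, hσsq, hσcomm⟩ := sqrt hAH hscal hc'E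
    have hq : h * (σ * σ) * h = 0 := by
      rw [hσsq, mul_assoc, hc'h, mul_zero]
    obtain ⟨hhσ, hσh⟩ := qa hAH hG (Epos_subset_G hσE) hq
    have hhc' : h * c' = 0 := by rw [← hσsq, ← mul_assoc, hhσ, zero_mul]
    have hhc : h * c = c * h := by
      rw [hcc', mul_smul_comm, smul_mul_assoc, hhc', hc'h]
    have hfnh : ∀ n, f n * h = 0 := by
      intro n
      induction n with
      | zero => rw [hf00, zero_mul]
      | succ n ih => rw [hrec, add_mul, ih, mul_assoc, hc'h, mul_zero, add_zero]
    -- w = h * h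
    have hwE : h * h ∈ er.Epos := sq_mem_Epos hG
    obtain ⟨w, M', hM'0, hww, hwE', hw1⟩ := normalize hscal hwE
    have hc'w : c' * w = 0 := by
      have : c' * (h * h) = 0 := by rw [← mul_assoc, hc'h, zero_mul]
      rw [hww, mul_smul_comm] at this
      have := congrArg (fun y => M'⁻¹ • y) this
      simpa [smul_smul, inv_mul_cancel₀ hM'0.ne'] using this
    have hwc' : w * c' = 0 := by
      have : (h * h) * c' = 0 := by rw [mul_assoc, hhc', mul_zero]
      rw [hww, smul_mul_assoc] at this
      have := congrArg (fun y => M'⁻¹ • y) this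
      simpa [smul_smul, inv_mul_cancel₀ hM'0.ne'] using this
    have htw : t * w = w := by rw [htdef, sub_mul, one_mul, hc'w, sub_zero]
    have hwt : w * t = w := by rw [htdef, mul_sub, mul_one, hwc', sub_zero]
    have htnw : ∀ n, t ^ n * w = w := by
      intro n
      induction n with
      | zero => rw [pow_zero, one_mul]
      | succ n ih => rw [pow_succ, mul_assoc, htw, ih]
    have hwtn : ∀ n, w * t ^ n = w := by
      intro n
      induction n with
      | zero => rw [pow_zero, mul_one]
      | succ n ih => rw [pow_succ, ← mul_assoc, ih, hwt]
    have hub : ∀ n, (1 - w) - f n ∈ er.Epos := by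
      intro n
      have he1' : (1 - w) - f n = t ^ n * (1 - w) := by
        show (1 - w) - (1 - t ^ n) = t ^ n * (1 - w)
        rw [mul_sub, mul_one, htnw]; abel
      rw [he1']
      exact mul_mem_Epos (htpowE n) hw1
        (by rw [mul_sub, sub_mul, mul_one, one_mul, htnw, hwtn])
    have hew := helub (1 - w) (sub_mem_G one_mem_G (Epos_subset_G hwE')) hub
    have q1 : e * w * e ∈ er.Epos := conj_mem_Epos he0 hwE'
    have q2 : e * ((1 - w) - e) * e ∈ er.Epos := conj_mem_Epos he0 hew
    have hq2 : e * ((1 - w) - e) * e = -(e * w * e) := by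
      simp only [mul_sub, sub_mul, mul_one, one_mul, heidem]
      abel
    have hsum : e * w * e + e * ((1 - w) - e) * e = 0 := by rw [hq2]; abel
    have hewe := (epos_pair q1 q2 hsum).1
    have hewe' : e * (h * h) * e = 0 := by
      rw [hww, mul_smul_comm, smul_mul_assoc, hewe, smul_zero]
    exact (qa hAH heG hG hewe').1
  · intro heh
    rw [← hce, mul_assoc, heh, mul_zero]

end ERingProof
namespace ERingProof

variable {R : Type*} [Ring R] [Algebra ℝ R] {er : ERing R}

/-- Uniqueness of positive square roots. -/
theorem sqrt_unique (hAH : er.IsAH) (hscal : ∀ l : ℝ, 0 ≤ l → ∀ a ∈ er.Epos, l • a ∈ er.Epos)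
    {m m' : R} (hm : m ∈ er.Epos) (hm' : m' ∈ er.Epos) (h : m * m = m' * m') :
    m = m' := by
  -- commuting case
  have comm_case : ∀ x y : R, x ∈ er.Epos → y ∈ er.Epos → x * y = y * x →
      x * x = y * y → x = y := by
    intro x y hx hy hxy hsq
    set d := x - y with hd
    have hdG : d ∈ er.G := sub_mem_G (Epos_subset_G hx) (Epos_subset_G hy)
    have hdd : d * d ∈ er.Epos := sq_mem_Epos hdG
    have hdxy : d * (x + y) = 0 := by
      rw [hd, sub_mul, mul_add, mul_add, hxy, hsq]; abel
    have hdx : d * x = x * d := by rw [hd, sub_mul, mul_sub, hxy]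
    have hsum : (d * d) * x + (d * d) * y = 0 := by
      rw [← mul_add, mul_assoc, hdxy, mul_zero]
    have hx1 : (d * d) * x ∈ er.Epos := mul_mem_Epos hdd hx
      (by rw [mul_assoc, hdx, ← mul_assoc, hdx, mul_assoc])
    have hdy : d * y = y * d := by rw [hd, sub_mul, mul_sub, hxy]
    have hy1 : (d * d) * y ∈ er.Epos := mul_mem_Epos hdd hy
      (by rw [mul_assoc, hdy, ← mul_assoc, hdy, mul_assoc])
    obtain ⟨hz1, hz2⟩ := epos_pair hx1 hy1 hsum
    have hd3 : d * d * d = 0 := by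
      have : d * d * d = (d * d) * x - (d * d) * y := by
        rw [← mul_sub]
      rw [this, hz1, hz2, sub_zero]
    have hd4 : (d * d) * (d * d) = 0 := by
      rw [mul_assoc, ← mul_assoc d d d, hd3, mul_zero]
    have hdd0 : d * d = 0 := eq_zero_of_sq hAH (Epos_subset_G hdd) hd4
    have hd0 : d = 0 := eq_zero_of_sq hAH hdG hdd0
    rw [← sub_eq_zero]; exact hd0
  obtain ⟨σ, hσE, hσsq, hσcomm⟩ := sqrt hAH hscal (sq_mem_Epos (Epos_subset_G hm))
  have hmc : m * (m * m) = (m * m) * m := by rw [mul_assoc]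
  have hmσ : m * σ = σ * m := hσcomm m (Epos_subset_G hm) hmc
  have hm'c : m' * (m * m) = (m * m) * m' := by rw [h, mul_assoc]
  have hm'σ : m' * σ = σ * m' := hσcomm m' (Epos_subset_G hm') hm'c
  have e1 : m = σ := comm_case m σ hm hσE hmσ (by rw [hσsq])
  have e2 : m' = σ := comm_case m' σ hm' hσE hm'σ (by rw [hσsq, ← h])
  rw [e1, e2]

/-- Carrier projections for arbitrary elements of `G`. -/
theorem carrier_gen (hAH : er.IsAH) (hscal : ∀ l : ℝ, 0 ≤ l → ∀ a ∈ er.Epos, l • a ∈ er.Epos)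
    {y : R} (hy : y ∈ er.G) :
    ∃ e, e ∈ er.Epos ∧ 1 - e ∈ er.Epos ∧ e * e = e ∧
      (∀ h ∈ er.G, (y * h = 0 ↔ e * h = 0)) ∧
      (∀ h ∈ er.G, h * y = y * h → h * e = e * h) ∧ y * e = y ∧ e * y = y := by
  obtain ⟨e, heE, he1, heidem, hiff, hcom, _, _⟩ := carrier hAH hscal (sq_mem_Epos hy)
  have hiff' : ∀ h ∈ er.G, (y * h = 0 ↔ e * h = 0) := by
    intro h hG
    constructor
    · intro hyh
      exact (hiff h hG).mp (by rw [mul_assoc, hyh, mul_zero])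
    · intro heh
      have hyyh : (y * y) * h = 0 := (hiff h hG).mpr heh
      have : h * (y * y) * h = 0 := by rw [mul_assoc, hyyh, mul_zero]
      exact (qa hAH hG hy this).2
  have hcom' : ∀ h ∈ er.G, h * y = y * h → h * e = e * h := by
    intro h hG hhy
    apply hcom h hG
    rw [← mul_assoc, hhy, mul_assoc, hhy, mul_assoc]
  have hye : y * e = y := by
    have h1 : y * (1 - e) = 0 := by
      apply (hiff' (1 - e) (sub_mem_G one_mem_G (Epos_subset_G heE))).mpr
      rw [mul_sub, mul_one, heidem, sub_self]
    rw [mul_sub, mul_one, sub_eq_zero] at h1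
    exact h1.symm
  have hey : e * y = y := by
    have h1 : y * (1 - e) = 0 := by
      rw [mul_sub, mul_one, hye, sub_self]
    have h2 := mul_eq_zero_symm hAH hy (sub_mem_G one_mem_G (Epos_subset_G heE)) h1
    rw [sub_mul, one_mul, sub_eq_zero] at h2
    exact h2.symm
  exact ⟨e, heE, he1, heidem, hiff', hcom', hye, hey⟩

/-- Positivity of the two halves of the absolute-value decomposition:
if `m ≥ 0`, `m² = x²` and `mCx` then `m - x ≥ 0` and `m + x ≥ 0`. -/
theorem posneg (hAH : er.IsAH) (hscal : ∀ l : ℝ, 0 ≤ l → ∀ a ∈ er.Epos, l • a ∈ er.Epos)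
    {x m : R} (hx : x ∈ er.G) (hm : m ∈ er.Epos) (hsq : m * m = x * x)
    (hcom : m * x = x * m) : m - x ∈ er.Epos ∧ m + x ∈ er.Epos := by
  set u := m - x with hu
  set v := m + x with hv
  have huG : u ∈ er.G := sub_mem_G (Epos_subset_G hm) hx
  have hvG : v ∈ er.G := add_mem_G (Epos_subset_G hm) hx
  have huv : u * v = 0 := by
    rw [hu, hv, sub_mul, mul_add, mul_add, hcom, hsq]; abel
  have hvu : v * u = 0 := by
    rw [hu, hv, add_mul, mul_sub, mul_sub, hcom, hsq]; abel
  have huvsum : u + v = (2:ℝ) • m := by rw [hu, hv]; module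
  have main : ∀ z z' : R, z ∈ er.G → z' ∈ er.G → z * z' = 0 → z' * z = 0 →
      z + z' = (2:ℝ) • m → z ∈ er.Epos := by
    intro z z' hzG hz'G hzz' hz'z hsum
    obtain ⟨e, heE, he1, heidem, hiff, hcome, hze, hez⟩ := carrier_gen hAH hscal hzG
    have hez' : e * z' = 0 := (hiff z' hz'G).mp hzz'
    have hz'e : z' * e = 0 :=
      mul_eq_zero_symm hAH (Epos_subset_G heE) hz'G hez'
    have key : e * ((2:ℝ) • m) * e = z := by
      rw [← hsum, mul_add, add_mul, hez, hez', zero_mul, add_zero, hze]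
    have : e * ((2:ℝ) • m) * e ∈ er.Epos :=
      conj_mem_Epos heE (smul_mem_Epos hscal (by norm_num) hm)
    rwa [key] at this
  constructor
  · exact main u v huG hvG huv hvu huvsum
  · exact main v u hvG huG hvu huv (by rw [← huvsum]; abel)

/-- Uniqueness of carriers. -/
theorem carrier_unique (hAH : er.IsAH) {a q q' : R}
    (hqG : q ∈ er.G) (hq'G : q' ∈ er.G)
    (hq : q * q = q) (hq' : q' * q' = q')
    (hiff : ∀ h ∈ er.G, (a * h = 0 ↔ q * h = 0))
    (hiff' : ∀ h ∈ er.G, (a * h = 0 ↔ q' * h = 0)) : q = q' := by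
  have h1 : q * (1 - q') = 0 := by
    apply (hiff (1 - q') (sub_mem_G one_mem_G hq'G)).mp
    apply (hiff' (1 - q') (sub_mem_G one_mem_G hq'G)).mpr
    rw [mul_sub, mul_one, hq', sub_self]
  have h2 : q' * (1 - q) = 0 := by
    apply (hiff' (1 - q) (sub_mem_G one_mem_G hqG)).mp
    apply (hiff (1 - q) (sub_mem_G one_mem_G hqG)).mpr
    rw [mul_sub, mul_one, hq, sub_self]
  rw [mul_sub, mul_one, sub_eq_zero] at h1 h2
  have hd : (q - q') * (q - q') = 0 := by
    rw [sub_mul, mul_sub, mul_sub, hq, hq', ← h1, ← h2]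
    abel
  have := eq_zero_of_sq hAH (sub_mem_G hqG hq'G) hd
  rw [sub_eq_zero] at this
  exact this

end ERingProof
namespace ERingProof

open ERing

variable {R : Type*} [Ring R] [Algebra ℝ R] {er : ERing R}

theorem spec_package (hAH : er.IsAH)
    (hscal : ∀ l : ℝ, 0 ≤ l → ∀ a ∈ er.Epos, l • a ∈ er.Epos)
    {g : R} (hg : g ∈ er.G) :
    ∃ t0 : ℝ, 0 ≤ t0 ∧ ∃ q : ℝ → R,
      (∀ l, q l ∈ er.Epos) ∧ (∀ l, q l * q l = q l) ∧
      (∀ l p', er.IsSpecProj g l p' → p' = 1 - q l) ∧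
      (∀ l, ∀ h ∈ er.G, h * g = g * h → h * q l = q l * h) ∧
      (∀ l l', l ≤ l' → q l' * q l = q l' ∧ q l * q l' = q l') ∧
      (∀ l l', l ≤ l' → (g - l • 1) * (q l - q l') ∈ er.Epos ∧
        (l' • 1 - g) * (q l - q l') ∈ er.Epos) ∧
      (∀ l, l < -t0 → q l = 1) ∧ (∀ l, t0 < l → q l = 0) := by
  obtain ⟨t0, ht0, htm, htp⟩ := exists_bound_G hscal hg
  refine ⟨t0, ht0, ?_⟩
  obtain ⟨x, hx⟩ : ∃ x : ℝ → R, x = fun l => g - l • 1 := ⟨_, rfl⟩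
  have hxG : ∀ l, x l ∈ er.G := by
    intro l; simp only [hx]; exact sub_mem_G hg (smul_mem_G hscal _ one_mem_G)
  have hgx : ∀ l, g * x l = x l * g := by
    intro l
    simp only [hx]
    rw [mul_sub, sub_mul, mul_smul_one, smul_one_mul]
  have hcomm_x : ∀ l (h : R), h * g = g * h → h * x l = x l * h := by
    intro l h hh
    simp only [hx]
    rw [mul_sub, sub_mul, hh, mul_smul_one, smul_one_mul]
  -- absolute values
  have habs : ∀ l : ℝ, ∃ mm, mm ∈ er.Epos ∧ mm * mm = x l * x l ∧
      (∀ h ∈ er.G, h * x l = x l * h → h * mm = mm * h) := by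
    intro l
    obtain ⟨mm, hmE, hmsq, hmcomm⟩ := sqrt hAH hscal (sq_mem_Epos (hxG l))
    refine ⟨mm, hmE, hmsq, ?_⟩
    intro h hG hcom
    exact hmcomm h hG (by rw [← mul_assoc, hcom, mul_assoc, hcom, mul_assoc])
  choose m hmE hmsq hmcomm using habs
  have hmx : ∀ l, m l * x l = x l * m l :=
    fun l => (hmcomm l (x l) (hxG l) rfl).symm
  obtain ⟨a, ha⟩ : ∃ a : ℝ → R, a = fun l => (1/2 : ℝ) • (m l + x l) := ⟨_, rfl⟩
  obtain ⟨b, hb⟩ : ∃ b : ℝ → R, b = fun l => (1/2 : ℝ) • (m l - x l) := ⟨_, rfl⟩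
  have posparts := fun l => posneg hAH hscal (hxG l) (hmE l) (hmsq l) (hmx l)
  have haE : ∀ l, a l ∈ er.Epos := by
    intro l; simp only [ha]; exact smul_mem_Epos hscal (by norm_num) (posparts l).2
  have hbE : ∀ l, b l ∈ er.Epos := by
    intro l; simp only [hb]; exact smul_mem_Epos hscal (by norm_num) (posparts l).1
  have haG : ∀ l, a l ∈ er.G := fun l => Epos_subset_G (haE l)
  have hbG : ∀ l, b l ∈ er.G := fun l => Epos_subset_G (hbE l)
  have hab_sub : ∀ l, a l - b l = x l := by
    intro l; simp only [ha, hb]; module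
  have hab0 : ∀ l, a l * b l = 0 := by
    intro l
    simp only [ha, hb]
    rw [smul_mul_assoc, mul_smul_comm, smul_smul]
    have hz : (m l + x l) * (m l - x l) = 0 := by
      simp only [add_mul, mul_sub]
      rw [hmx l, hmsq l]; abel
    rw [hz, smul_zero]
  -- carriers
  have hcar := fun l => carrier hAH hscal (haE l)
  choose q hqE hq1E hqidem hqiff hqcomm hqae hqea using hcar
  have hqG : ∀ l, q l ∈ er.G := fun l => Epos_subset_G (hqE l)
  -- the commutation chain
  have hchain : ∀ l, ∀ h ∈ er.G, h * g = g * h →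
      (h * x l = x l * h) ∧ (h * m l = m l * h) ∧ (h * a l = a l * h) ∧
      (h * b l = b l * h) ∧ (h * q l = q l * h) := by
    intro l h hG hh
    have h1 := hcomm_x l h hh
    have h2 := hmcomm l h hG h1
    have h3 : h * a l = a l * h := by
      simp only [ha]
      rw [mul_smul_comm, smul_mul_assoc, mul_add, add_mul, h1, h2]
    have h4 : h * b l = b l * h := by
      simp only [hb]
      rw [mul_smul_comm, smul_mul_assoc, mul_sub, sub_mul, h1, h2]
    have h5 := hqcomm l h hG h3
    exact ⟨h1, h2, h3, h4, h5⟩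
  have hag : ∀ l, a l * g = g * a l := fun l => ((hchain l g hg rfl).2.2.1).symm
  have hbg : ∀ l, b l * g = g * b l := fun l => ((hchain l g hg rfl).2.2.2.1).symm
  have hqg : ∀ l, q l * g = g * q l := fun l => ((hchain l g hg rfl).2.2.2.2).symm
  have hxg : ∀ l, x l * g = g * x l := fun l => (hgx l).symm
  -- cross commutations
  have hxq_comm : ∀ l l', x l * q l' = q l' * x l :=
    fun l l' => (hchain l' (x l) (hxG l) (hxg l)).2.2.2.2
  have haq_comm : ∀ l l', a l * q l' = q l' * a l :=
    fun l l' => (hchain l' (a l) (haG l) (hag l)).2.2.2.2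
  have hbq_comm : ∀ l l', b l * q l' = q l' * b l :=
    fun l l' => (hchain l' (b l) (hbG l) (hbg l)).2.2.2.2
  have hqq_comm : ∀ l l', q l * q l' = q l' * q l :=
    fun l l' => (hchain l' (q l) (hqG l) (hqg l)).2.2.2.2
  -- base identities
  have hqb0 : ∀ l, q l * b l = 0 := by
    intro l
    exact (hqiff l (b l) (hbG l)).mp (hab0 l)
  have hbq0 : ∀ l, b l * q l = 0 :=
    fun l => mul_eq_zero_symm hAH (hqG l) (hbG l) (hqb0 l)
  have hxq : ∀ l, x l * q l = a l := by
    intro l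
    rw [← hab_sub l, sub_mul, hqae l, hbq0 l, sub_zero]
  have hxp : ∀ l, x l * (1 - q l) = - b l := by
    intro l
    rw [mul_sub, mul_one, hxq, ← hab_sub l]; abel
  -- monotonicity
  have hmono0 : ∀ l l', l ≤ l' → q l' * (1 - q l) = 0 := by
    intro l l' hll
    have hq1G : (1 : R) - q l ∈ er.G := sub_mem_G one_mem_G (hqG l)
    have hxl' : x l' = x l - (l' - l) • 1 := by simp only [hx]; module
    have e1 : a l' * (1 - q l) = q l' * (x l' * (1 - q l)) := by
      rw [← hxq l', hxq_comm l' l', mul_assoc]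
    have e2 : x l' * (1 - q l) = -(b l) - (l' - l) • ((1:R) - q l) := by
      rw [hxl', sub_mul, smul_one_mul, hxp l]
    have e3 : a l' * (1 - q l) + q l' * b l + (l' - l) • (q l' * ((1:R) - q l)) = 0 := by
      rw [e1, e2, mul_sub, mul_neg, mul_smul_comm]
      abel
    have m1 : a l' * (1 - q l) ∈ er.Epos := by
      apply mul_mem_Epos (haE l') (hq1E l)
      rw [mul_sub, sub_mul, mul_one, one_mul, haq_comm l' l]
    have m2 : q l' * b l ∈ er.Epos :=
      mul_mem_Epos (hqE l') (hbE l) (hbq_comm l l').symm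
    have m3 : (l' - l) • (q l' * ((1:R) - q l)) ∈ er.Epos := by
      apply smul_mem_Epos hscal (by linarith)
      apply mul_mem_Epos (hqE l') (hq1E l)
      rw [mul_sub, sub_mul, mul_one, one_mul, hqq_comm l' l]
    obtain ⟨z1, _, _⟩ := epos_triple m1 m2 m3 e3
    exact (hqiff l' (1 - q l) hq1G).mp z1
  have hmono : ∀ l l', l ≤ l' → q l' * q l = q l' ∧ q l * q l' = q l' := by
    intro l l' hll
    have h0 := hmono0 l l' hll
    rw [mul_sub, mul_one, sub_eq_zero] at h0
    exact ⟨h0.symm, by rw [hqq_comm l l', ← h0]⟩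
  -- termwise positivity
  have hterm : ∀ l l', l ≤ l' → (g - l • 1) * (q l - q l') ∈ er.Epos ∧
      (l' • 1 - g) * (q l - q l') ∈ er.Epos := by
    intro l l' hll
    obtain ⟨hm1, hm2⟩ := hmono l l' hll
    constructor
    · have hd : q l - q l' = q l * ((1:R) - q l') := by
        rw [mul_sub, mul_one, hm2]
      have : (g - l • 1) * (q l - q l') = a l * ((1:R) - q l') := by
        rw [hd, ← mul_assoc]
        have hxx : (g - l • (1:R)) = x l := by simp only [hx]
        rw [hxx, hxq l]
      rw [this]
      apply mul_mem_Epos (haE l) (hq1E l')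
      rw [mul_sub, sub_mul, mul_one, one_mul, haq_comm l l']
    · have hd : q l - q l' = ((1:R) - q l') * q l := by
        rw [sub_mul, one_mul, hm1]
      have hneg : (l' • (1:R) - g) = -(x l') := by simp only [hx]; abel
      have : (l' • (1:R) - g) * (q l - q l') = b l' * q l := by
        rw [hd, hneg, ← mul_assoc, neg_mul, hxp l', neg_neg]
      rw [this]
      exact mul_mem_Epos (hbE l') (hqE l) (hbq_comm l' l)
  -- boundary: low
  have hlow : ∀ l, l < -t0 → q l = 1 := by
    intro l hl
    have hrE : (1:R) - q l ∈ er.Epos := hq1E l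
    have hrr : ((1:R) - q l) * ((1:R) - q l) = (1:R) - q l := by
      simp only [sub_mul, mul_sub, mul_one, one_mul, hqidem l]
      abel
    have hd0 : (0:ℝ) < -t0 - l := by linarith
    have hxd : x l - (-t0 - l) • 1 ∈ er.Epos := by
      have he : x l - (-t0 - l) • (1:R) = t0 • (1:R) + g := by simp only [hx]; module
      rw [he]; exact htp
    have hconj : ((1:R) - q l) * (x l - (-t0 - l) • 1) * ((1:R) - q l) ∈ er.Epos :=
      conj_mem_Epos hrE hxd
    have hrx : ((1:R) - q l) * x l = x l * ((1:R) - q l) := by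
      rw [mul_sub, sub_mul, mul_one, one_mul, hxq_comm l l]
    have hid : ((1:R) - q l) * (x l - (-t0 - l) • 1) * ((1:R) - q l) =
        -(b l) - (-t0 - l) • ((1:R) - q l) := by
      have s1 : ((1:R) - q l) * (x l - (-t0 - l) • 1) =
          ((1:R) - q l) * x l - (-t0 - l) • ((1:R) - q l) := by
        rw [mul_sub, mul_smul_one]
      rw [s1, sub_mul, smul_mul_assoc, hrr, hrx, mul_assoc, hrr, hxp l]
    have mbr : b l ∈ er.Epos := hbE l
    have mdr : (-t0 - l) • ((1:R) - q l) ∈ er.Epos := smul_mem_Epos hscal hd0.le hrE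
    have hsum : (((1:R) - q l) * (x l - (-t0 - l) • 1) * ((1:R) - q l)) +
        b l + (-t0 - l) • ((1:R) - q l) = 0 := by
      rw [hid]; abel
    obtain ⟨_, _, z3⟩ := epos_triple hconj mbr mdr hsum
    have hr0 : (1:R) - q l = 0 := by
      have := congrArg (fun y => (-t0 - l)⁻¹ • y) z3
      simpa [smul_smul, inv_mul_cancel₀ hd0.ne'] using this
    rw [sub_eq_zero] at hr0
    exact hr0.symm
  -- boundary: high
  have hhigh : ∀ l, t0 < l → q l = 0 := by
    intro l hl
    have hnegx : -(x l) ∈ er.Epos := by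
      have : -(x l) = (l - t0) • (1:R) + (t0 • (1:R) - g) := by simp only [hx]; module
      rw [this]
      exact add_mem_Epos (smul_mem_Epos hscal (by linarith) one_mem_Epos) htm
    have hmeq : m l = -(x l) := by
      apply sqrt_unique hAH hscal (hmE l) hnegx
      rw [hmsq l, neg_mul_neg]
    have ha0 : a l = 0 := by
      simp only [ha]
      rw [hmeq]
      module
    have := (hqiff l 1 one_mem_G).mp (by rw [ha0, zero_mul])
    rwa [mul_one] at this
  -- identification with hypothesis data
  have hident : ∀ l p', er.IsSpecProj g l p' → p' = 1 - q l := by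
    intro l p' hsp
    obtain ⟨a'', ⟨ha''G, m'', ⟨hm''G, hm''pos, hm''sq⟩, hsum⟩, q'', ⟨⟨hq''G, hq''idem⟩, hq''iff⟩, hp'⟩ := hsp
    have hm''E : m'' ∈ er.Epos := by
      have h : m'' - 0 ∈ er.Epos := hm''pos
      rwa [sub_zero] at h
    have hm''sq' : m'' * m'' = x l * x l := by
      have h := hm''sq
      rw [pow_two, pow_two] at h
      rw [hx]
      exact h
    have hm''m : m'' = m l :=
      sqrt_unique hAH hscal hm''E (hmE l) (by rw [hm''sq', hmsq l])
    have ha''a : a'' = a l := by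
      have h2 : a'' + a'' = m l + x l := by rw [← hm''m]; simp only [hx]; exact hsum
      calc a'' = (1/2 : ℝ) • (a'' + a'') := (half_add_self a'').symm
      _ = (1/2 : ℝ) • (m l + x l) := by rw [h2]
      _ = a l := by simp only [ha]
    have hq''sq : q'' * q'' = q'' := by
      have h := hq''idem
      rw [pow_two] at h
      exact h.symm
    have hq''iff' : ∀ h ∈ er.G, (a l * h = 0 ↔ q'' * h = 0) := by
      intro h hG
      rw [← ha''a]
      exact hq''iff h hG
    have := carrier_unique hAH hq''G (hqG l) hq''sq (hqidem l) hq''iff' (hqiff l)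
    rw [hp', this]
  exact ⟨q, hqE, hqidem, hident, fun l h hG hh => (hchain l h hG hh).2.2.2.2,
    hmono, hterm, hlow, hhigh⟩

end ERingProof
namespace ERingProof

variable {R : Type*} [Ring R] [Algebra ℝ R] {er : ERing R}

theorem sum_mem_Epos {ι : Type*} {t : Finset ι} {f : ι → R}
    (h : ∀ i ∈ t, f i ∈ er.Epos) : ∑ i ∈ t, f i ∈ er.Epos :=
  AddSubmonoid.sum_mem _ h

theorem sum_mem_G {ι : Type*} {t : Finset ι} {f : ι → R}
    (h : ∀ i ∈ t, f i ∈ er.G) : ∑ i ∈ t, f i ∈ er.G :=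
  Finset.sum_induction f (· ∈ er.G) (fun _ _ => add_mem_G) zero_mem_G h

theorem sum_range_double {M : Type*} [AddCommMonoid M] (F : ℕ → M) (K : ℕ) :
    ∑ j ∈ Finset.range (2 * K), F j = ∑ i ∈ Finset.range K, (F (2 * i) + F (2 * i + 1)) := by
  induction K with
  | zero => simp
  | succ K ih =>
      rw [Nat.mul_succ, Finset.sum_range_succ, Finset.sum_range_succ,
        Finset.sum_range_succ, ← ih, ← add_assoc]

theorem main_reverse (hAH : er.IsAH)
    (hscal : ∀ l : ℝ, 0 ≤ l → ∀ a ∈ er.Epos, l • a ∈ er.Epos)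
    {g h : R} (hg : g ∈ er.G) (hh : h ∈ er.G)
    {t0 : ℝ} (ht0 : 0 ≤ t0) {q : ℝ → R}
    (hqE : ∀ l, q l ∈ er.Epos) (hqidem : ∀ l, q l * q l = q l)
    (hqchain : ∀ l, ∀ x ∈ er.G, x * g = g * x → x * q l = q l * x)
    (hmono : ∀ l l', l ≤ l' → q l' * q l = q l' ∧ q l * q l' = q l')
    (hterm : ∀ l l', l ≤ l' → (g - l • 1) * (q l - q l') ∈ er.Epos ∧
      (l' • 1 - g) * (q l - q l') ∈ er.Epos)
    (hlow : ∀ l, l < -t0 → q l = 1) (hhigh : ∀ l, t0 < l → q l = 0)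
    (hq_comm : ∀ l, h * q l = q l * h) : h * g = g * h := by
  have hqg : ∀ l, q l * g = g * q l := fun l => (hqchain l g hg rfl).symm
  have hqq : ∀ l l', q l * q l' = q l' * q l :=
    fun l l' => hqchain l' (q l) (Epos_subset_G (hqE l)) (hqg l)
  set T : ℝ := t0 + 1 with hT
  have hT0 : 0 < T := by simp only [hT]; linarith
  obtain ⟨lam, hlam⟩ : ∃ lam : ℕ → ℕ → ℝ,
      ∀ n i, lam n i = -T + (i : ℝ) * (2 * T / 2 ^ n) :=
    ⟨fun n i => -T + (i : ℝ) * (2 * T / 2 ^ n), fun _ _ => rfl⟩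
  have hlam_succ : ∀ n i, lam n (i + 1) = lam n i + 2 * T / 2 ^ n := by
    intro n i; simp only [hlam]; push_cast; ring
  have hmesh0 : ∀ n : ℕ, 0 < 2 * T / 2 ^ n := by intro n; positivity
  have hlam_mono : ∀ n i, lam n i ≤ lam n (i + 1) := by
    intro n i; rw [hlam_succ]; have := hmesh0 n; linarith
  have hlam0 : ∀ n, lam n 0 = -T := by intro n; simp [hlam]
  have hlamK : ∀ n, lam n (2 ^ n) = T := by
    intro n
    simp only [hlam]
    push_cast
    field_simp
    ring
  have hdy : ∀ n i, lam (n + 1) (2 * i) = lam n i := by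
    intro n i
    simp only [hlam]
    push_cast
    field_simp
    ring
  obtain ⟨s, hs⟩ : ∃ s : ℕ → R, ∀ n, s n =
      ∑ j ∈ Finset.range (2 ^ n), (lam n j) • (q (lam n j) - q (lam n (j + 1))) :=
    ⟨fun n => ∑ j ∈ Finset.range (2 ^ n), (lam n j) • (q (lam n j) - q (lam n (j + 1))),
      fun _ => rfl⟩
  have hq1 : ∀ n, q (lam n 0) = 1 := by
    intro n; apply hlow; rw [hlam0]; simp only [hT]; linarith
  have hq0 : ∀ n, q (lam n (2 ^ n)) = 0 := by
    intro n; apply hhigh; rw [hlamK]; simp only [hT]; linarith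
  have htele : ∀ n, ∑ j ∈ Finset.range (2 ^ n),
      (q (lam n j) - q (lam n (j + 1))) = 1 := by
    intro n
    rw [Finset.sum_range_sub' (fun j => q (lam n j)), hq1, hq0, sub_zero]
  have hdpos : ∀ l l', l ≤ l' → q l - q l' ∈ er.Epos := by
    intro l l' hll
    obtain ⟨h1, h2⟩ := hmono l l' hll
    have hdd : (q l - q l') * (q l - q l') = q l - q l' := by
      simp only [sub_mul, mul_sub, hqidem, h1, h2]
      abel
    rw [← hdd]
    exact sq_mem_Epos (sub_mem_G (Epos_subset_G (hqE l)) (Epos_subset_G (hqE l')))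
  have hsG : ∀ n, s n ∈ er.G := by
    intro n
    rw [hs n]
    apply sum_mem_G
    intro j _
    exact smul_mem_G hscal _
      (sub_mem_G (Epos_subset_G (hqE _)) (Epos_subset_G (hqE _)))
  have hP1 : ∀ n, g - s n ∈ er.Epos := by
    intro n
    have e : g - s n = ∑ j ∈ Finset.range (2 ^ n),
        ((g - (lam n j) • 1) * (q (lam n j) - q (lam n (j + 1)))) := by
      have e2 : ∀ j ∈ Finset.range (2 ^ n),
          (g - (lam n j) • (1:R)) * (q (lam n j) - q (lam n (j + 1))) =
          g * (q (lam n j) - q (lam n (j + 1))) -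
            (lam n j) • (q (lam n j) - q (lam n (j + 1))) := by
        intro j _; rw [sub_mul, smul_one_mul]
      rw [Finset.sum_congr rfl e2, Finset.sum_sub_distrib, ← Finset.mul_sum,
        htele n, mul_one, hs n]
    rw [e]
    apply sum_mem_Epos
    intro j _
    exact (hterm (lam n j) (lam n (j + 1)) (hlam_mono n j)).1
  have hP1' : ∀ n, (s n + (2 * T / 2 ^ n) • (1:R)) - g ∈ er.Epos := by
    intro n
    have e : (s n + (2 * T / 2 ^ n) • (1:R)) - g = ∑ j ∈ Finset.range (2 ^ n),
        (((lam n (j + 1)) • (1:R) - g) * (q (lam n j) - q (lam n (j + 1)))) := by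
      have e2 : ∀ j ∈ Finset.range (2 ^ n),
          ((lam n (j + 1)) • (1:R) - g) * (q (lam n j) - q (lam n (j + 1))) =
          ((lam n j) • (q (lam n j) - q (lam n (j + 1))) +
            (2 * T / 2 ^ n) • (q (lam n j) - q (lam n (j + 1)))) -
            g * (q (lam n j) - q (lam n (j + 1))) := by
        intro j _
        rw [sub_mul, smul_one_mul, hlam_succ, add_smul]
      rw [Finset.sum_congr rfl e2, Finset.sum_sub_distrib, Finset.sum_add_distrib,
        ← Finset.smul_sum, ← Finset.mul_sum, htele n, mul_one, hs n]
    rw [e]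
    apply sum_mem_Epos
    intro j _
    exact (hterm (lam n j) (lam n (j + 1)) (hlam_mono n j)).2
  have hP2 : ∀ n, s (n + 1) - s n ∈ er.Epos := by
    intro n
    have h2pow : (2:ℕ) ^ (n + 1) = 2 * 2 ^ n := by rw [pow_succ, Nat.mul_comm]
    have e : s (n + 1) - s n = ∑ i ∈ Finset.range (2 ^ n),
        ((lam (n+1) (2*i+1) - lam n i) •
          (q (lam (n+1) (2*i+1)) - q (lam n (i+1)))) := by
      have e1 : s (n + 1) = ∑ i ∈ Finset.range (2 ^ n),
          ((lam (n+1) (2*i)) • (q (lam (n+1) (2*i)) - q (lam (n+1) (2*i+1))) +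
           (lam (n+1) (2*i+1)) • (q (lam (n+1) (2*i+1)) - q (lam (n+1) (2*i+1+1)))) := by
        rw [hs (n+1)]
        rw [h2pow, sum_range_double (fun j => (lam (n+1) j) •
          (q (lam (n+1) j) - q (lam (n+1) (j+1))))]
      have e3 : ∀ i ∈ Finset.range (2 ^ n),
          ((lam (n+1) (2*i)) • (q (lam (n+1) (2*i)) - q (lam (n+1) (2*i+1))) +
           (lam (n+1) (2*i+1)) • (q (lam (n+1) (2*i+1)) - q (lam (n+1) (2*i+1+1)))) -
          (lam n i) • (q (lam n i) - q (lam n (i+1))) =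
          (lam (n+1) (2*i+1) - lam n i) •
            (q (lam (n+1) (2*i+1)) - q (lam n (i+1))) := by
        intro i _
        have hA : lam (n+1) (2*i) = lam n i := hdy n i
        have hB : lam (n+1) (2*i+1+1) = lam n (i+1) := by
          have h' := hdy n (i+1)
          have : 2 * (i+1) = 2*i+1+1 := by ring
          rwa [this] at h'
        rw [hA, hB]
        module
      rw [e1, hs n, ← Finset.sum_sub_distrib, Finset.sum_congr rfl e3]
    rw [e]
    apply sum_mem_Epos
    intro i _
    have hge : lam n i ≤ lam (n+1) (2*i+1) := by
      rw [← hdy n i]; exact hlam_mono (n+1) (2*i)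
    have hle : lam (n+1) (2*i+1) ≤ lam n (i+1) := by
      have h' := hdy n (i+1)
      have h2 : 2 * (i+1) = 2*i+1+1 := by ring
      rw [h2] at h'
      rw [← h']
      exact hlam_mono (n+1) (2*i+1)
    exact smul_mem_Epos hscal (by linarith)
      (hdpos _ _ hle)
  have hscomm : ∀ nn mm, s nn * s mm = s mm * s nn := by
    have hterm_comm : ∀ (la lb lc ld r r' : ℝ),
        (r • (q la - q lb)) * (r' • (q lc - q ld)) =
        (r' • (q lc - q ld)) * (r • (q la - q lb)) := by
      intro la lb lc ld r r'
      have hc : (q la - q lb) * (q lc - q ld) = (q lc - q ld) * (q la - q lb) := by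
        simp only [sub_mul, mul_sub, hqq]
        abel
      rw [smul_mul_assoc, mul_smul_comm, smul_mul_assoc, mul_smul_comm, hc, smul_comm]
    intro nn mm
    rw [hs nn, hs mm]
    simp only [Finset.sum_mul, Finset.mul_sum]
    rw [Finset.sum_comm]
    exact Finset.sum_congr rfl fun j _ => Finset.sum_congr rfl fun k _ =>
      hterm_comm _ _ _ _ _ _
  have hhs : ∀ n, h * s n = s n * h := by
    intro n
    rw [hs n]
    rw [Finset.mul_sum, Finset.sum_mul]
    apply Finset.sum_congr rfl
    intro j _
    rw [mul_smul_comm, smul_mul_assoc]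
    congr 1
    rw [mul_sub, sub_mul, hq_comm, hq_comm]
  obtain ⟨st, hstG, hstge, hstlub, hstcomm⟩ := vigier hAH s hsG hP2 hscomm g hg hP1
  have hgst : g - st ∈ er.Epos := hstlub g hg hP1
  have harch : g - st = 0 := by
    apply arch hAH hscal (sub_mem_G hg hstG)
    intro ε hε
    obtain ⟨n, hn⟩ := pow_unbounded_of_one_lt (2 * T / ε) (one_lt_two (α := ℝ))
    have hmesh : 2 * T / 2 ^ n < ε := by
      rw [div_lt_iff₀ (by positivity : (0:ℝ) < 2 ^ n)]
      rw [div_lt_iff₀ hε] at hn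
      calc 2 * T < 2 ^ n * ε := hn
      _ = ε * 2 ^ n := by ring
    constructor
    · have k1 : (2 * T / 2 ^ n) • (1:R) - (g - s n) ∈ er.Epos := by
        have : (2 * T / 2 ^ n) • (1:R) - (g - s n) =
            (s n + (2 * T / 2 ^ n) • (1:R)) - g := by abel
        rw [this]; exact hP1' n
      have k2 : st - s n ∈ er.Epos := hstge n
      have e : ε • (1:R) - (g - st) = (ε - 2 * T / 2 ^ n) • (1:R) +
          ((2 * T / 2 ^ n) • (1:R) - (g - s n)) + (st - s n) := by module
      rw [e]
      exact add_mem_Epos (add_mem_Epos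
        (smul_mem_Epos hscal (by linarith) one_mem_Epos) k1) k2
    · exact add_mem_Epos (smul_mem_Epos hscal hε.le one_mem_Epos) hgst
  rw [sub_eq_zero] at harch
  have hfin := hstcomm h hh hhs
  rw [harch]
  exact hfin.symm

end ERingProof

/-- In an AH-algebra (with real scalars), `h` commutes with `g`
iff `h` commutes with every projection `p_{g,λ}` of the spectral resolution of `g`. -/
theorem stmt17 {R : Type*} [Ring R] [Algebra ℝ R] (er : ERing R) (hAH : er.IsAH)
    (hscal : ∀ l : ℝ, 0 ≤ l → ∀ a ∈ er.Epos, l • a ∈ er.Epos)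
    (g h : R) (hg : g ∈ er.G) (hh : h ∈ er.G) (p : ℝ → R)
    (hp : ∀ l : ℝ, er.IsSpecProj g l (p l)) :
    (h * g = g * h) ↔ ∀ l : ℝ, h * p l = p l * h := by
  obtain ⟨t0, ht0, q, hqE, hqidem, hident, hqchain, hmono, hterm, hlow, hhigh⟩ :=
    ERingProof.spec_package hAH hscal hg
  have hpq : ∀ l, p l = 1 - q l := fun l => hident l (p l) (hp l)
  constructor
  · intro hcomm l
    have hq := hqchain l h hh hcomm
    rw [hpq l, mul_sub, sub_mul, mul_one, one_mul, hq]
  · intro hcl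
    have hq_comm : ∀ l, h * q l = q l * h := by
      intro l
      have h1 := hcl l
      rw [hpq l, mul_sub, sub_mul, mul_one, one_mul, sub_right_inj] at h1
      exact h1
    exact ERingProof.main_reverse hAH hscal hg hh ht0 hqE hqidem hqchain hmono hterm
      hlow hhigh hq_comm
end

section
/- Let G be an AH-algebra, let g ∈ G with spectral resolution (p_λ)_{λ∈ℝ}, and let α ∈ ℝ. Then p_α is the infimum in the partially ordered set P of the set {p_μ : μ ∈ ℝ, α < μ}. -/
namespace ERing

variable {R : Type*} [Ring R] (er : ERing R)

theorem mem_Epos_of_E {e : R} (he : e ∈ er.E) : e ∈ er.Epos :=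
  AddSubmonoid.subset_closure he

theorem zero_mem_Epos : (0:R) ∈ er.Epos := (AddSubmonoid.closure er.E).zero_mem

theorem one_mem_Epos : (1:R) ∈ er.Epos := er.mem_Epos_of_E er.one_mem

theorem add_mem_Epos {a b : R} (ha : a ∈ er.Epos) (hb : b ∈ er.Epos) : a + b ∈ er.Epos :=
  (AddSubmonoid.closure er.E).add_mem ha hb

theorem Epos_sub_G {a : R} (ha : a ∈ er.Epos) : a ∈ er.G :=
  ⟨a, ha, 0, er.zero_mem_Epos, (sub_zero a).symm⟩

theorem zero_mem_G : (0:R) ∈ er.G := er.Epos_sub_G er.zero_mem_Epos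

theorem one_mem_G : (1:R) ∈ er.G := er.Epos_sub_G er.one_mem_Epos

theorem add_mem_G {g h : R} (hg : g ∈ er.G) (hh : h ∈ er.G) : g + h ∈ er.G := by
  obtain ⟨a, ha, b, hb, rfl⟩ := hg
  obtain ⟨c, hc, d, hd, rfl⟩ := hh
  exact ⟨a + c, er.add_mem_Epos ha hc, b + d, er.add_mem_Epos hb hd, by abel⟩

theorem neg_mem_G {g : R} (hg : g ∈ er.G) : -g ∈ er.G := by
  obtain ⟨a, ha, b, hb, rfl⟩ := hg
  exact ⟨b, hb, a, ha, by abel⟩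

theorem sub_mem_G {g h : R} (hg : g ∈ er.G) (hh : h ∈ er.G) : g - h ∈ er.G := by
  have := er.add_mem_G hg (er.neg_mem_G hh)
  simpa [sub_eq_add_neg] using this

theorem sq_mem_Epos {g : R} (hg : g ∈ er.G) : g ^ 2 ∈ er.Epos := by
  obtain ⟨a, ha, b, hb, rfl⟩ := hg
  exact er.epos_vi a ha b hb

theorem sq_mem_G {g : R} (hg : g ∈ er.G) : g ^ 2 ∈ er.G :=
  er.Epos_sub_G (er.sq_mem_Epos hg)

theorem mul_mem_Epos {a b : R} (ha : a ∈ er.Epos) (hb : b ∈ er.Epos)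
    (hc : a * b = b * a) : a * b ∈ er.Epos := er.epos_iii a ha b hb hc

theorem conj_mem_Epos {a b : R} (ha : a ∈ er.Epos) (hb : b ∈ er.Epos) :
    a * b * a ∈ er.Epos := er.epos_iv a ha b hb

theorem le_refl (a : R) : er.le a a := by
  have : a - a = 0 := sub_self a
  rw [le, this]; exact er.zero_mem_Epos

theorem le_trans {a b c : R} (h1 : er.le a b) (h2 : er.le b c) : er.le a c := by
  have := er.add_mem_Epos h2 h1
  rw [le] at *
  simpa using this

theorem eq_of_add_eq_zero_Epos {a b : R} (ha : a ∈ er.Epos) (hb : b ∈ er.Epos)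
    (h : a + b = 0) : a = 0 ∧ b = 0 := by
  have hna : -a ∈ er.Epos := by
    rw [neg_eq_of_add_eq_zero_right h]; exact hb
  have ha0 : a = 0 := er.epos_i a ha hna
  exact ⟨ha0, by rw [ha0] at h; simpa using h⟩

theorem le_antisymm {a b : R} (h1 : er.le a b) (h2 : er.le b a) : a = b := by
  have := er.eq_of_add_eq_zero_Epos h1 h2 (by abel)
  exact (sub_eq_zero.mp this.1).symm

end ERing
namespace ERing

variable {R : Type*} [Ring R] (er : ERing R)

theorem flip_zero (hQA : er.HasQA) {g h : R} (hg : g ∈ er.G) (hh : h ∈ er.G)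
    (hgh : g * h = 0) : h * g = 0 := by
  have h2 : h * g ^ 2 * h = 0 := by
    have e : h * g ^ 2 * h = h * g * (g * h) := by noncomm_ring
    rw [e, hgh, mul_zero]
  exact (hQA h hh g hg h2).1

theorem eq_zero_of_sq_eq_zero (hQA : er.HasQA) {g : R} (hg : g ∈ er.G)
    (h : g ^ 2 = 0) : g = 0 := by
  have h2 : (1:R) * g ^ 2 * 1 = 0 := by rw [h]; simp
  have := (hQA 1 er.one_mem_G g hg h2).1
  simpa using this

end ERing

namespace ERing

variable {R : Type*} [Ring R] [Algebra ℝ R] (er : ERing R)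

theorem smul_mem_G (hscal : ∀ l : ℝ, 0 ≤ l → ∀ a ∈ er.Epos, l • a ∈ er.Epos)
    (l : ℝ) {g : R} (hg : g ∈ er.G) : l • g ∈ er.G := by
  rcases le_total 0 l with hl | hl
  · obtain ⟨a, ha, b, hb, rfl⟩ := hg
    exact ⟨l • a, hscal l hl a ha, l • b, hscal l hl b hb, smul_sub l a b⟩
  · have h1 : (-l) • (-g) ∈ er.G := by
      obtain ⟨a, ha, b, hb, hrep⟩ := er.neg_mem_G hg
      rw [hrep]
      exact ⟨(-l) • a, hscal (-l) (by linarith) a ha, (-l) • b, hscal (-l) (by linarith) b hb,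
        smul_sub (-l) a b⟩
    simpa using h1

theorem mul_mem_G_of_comm (hscal : ∀ l : ℝ, 0 ≤ l → ∀ a ∈ er.Epos, l • a ∈ er.Epos)
    {g h : R} (hg : g ∈ er.G) (hh : h ∈ er.G) (hc : g * h = h * g) : g * h ∈ er.G := by
  have key : g * h = (2:ℝ)⁻¹ • ((g + h) ^ 2 - g ^ 2 - h ^ 2) := by
    have e : (g + h) ^ 2 - g ^ 2 - h ^ 2 = (2:ℝ) • (g * h) := by
      rw [two_smul]
      have : (g + h) ^ 2 = g ^ 2 + g * h + h * g + h ^ 2 := by noncomm_ring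
      rw [this, hc]; abel
    rw [e, smul_smul]
    norm_num
  rw [key]
  exact er.smul_mem_G hscal _ (er.sub_mem_G (er.sub_mem_G (er.sq_mem_G
    (er.add_mem_G hg hh)) (er.sq_mem_G hg)) (er.sq_mem_G hh))

theorem exists_nat_bound {a : R} (ha : a ∈ er.Epos) :
    ∃ n : ℕ, ((n:ℝ) • (1:R)) - a ∈ er.Epos := by
  induction ha using AddSubmonoid.closure_induction with
  | mem e he =>
      refine ⟨1, ?_⟩
      have : ((1:ℕ):ℝ) • (1:R) - e = 1 - e := by norm_num
      rw [this]
      exact er.mem_Epos_of_E (er.compl_mem e he)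
  | zero =>
      refine ⟨0, ?_⟩
      simpa using er.zero_mem_Epos
  | add x y _ _ hx hy =>
      obtain ⟨n, hn⟩ := hx
      obtain ⟨m, hm⟩ := hy
      refine ⟨n + m, ?_⟩
      have e : (((n + m : ℕ):ℝ)) • (1:R) - (x + y)
          = ((n:ℝ) • (1:R) - x) + ((m:ℝ) • (1:R) - y) := by
        push_cast
        rw [add_smul]; abel
      rw [e]
      exact er.add_mem_Epos hn hm

theorem arch (hCV : er.HasCV) (hscal : ∀ l : ℝ, 0 ≤ l → ∀ a ∈ er.Epos, l • a ∈ er.Epos)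
    {c : R} (hc : c ∈ er.Epos) (h : ∀ ε : ℝ, 0 < ε → er.le c (ε • (1:R))) : c = 0 := by
  set f : ℕ → R := fun n => (n:ℝ) • c with hf
  have hfG : ∀ n, f n ∈ er.G := fun n =>
    er.Epos_sub_G (hscal _ (by positivity) c hc)
  have hstep : ∀ n, f (n + 1) - f n = c := by
    intro n
    show ((n+1:ℕ):ℝ) • c - (n:ℝ) • c = c
    push_cast
    rw [add_smul]; simp
  have hasc : ∀ n, er.le (f n) (f (n + 1)) := by
    intro n
    show f (n+1) - f n ∈ er.Epos
    rw [hstep]; exact hc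
  have hcomm : ∀ m n, f m * f n = f n * f m := by
    intro m n
    show ((m:ℝ) • c) * ((n:ℝ) • c) = ((n:ℝ) • c) * ((m:ℝ) • c)
    rw [smul_mul_assoc, smul_mul_assoc, mul_smul_comm, mul_smul_comm, smul_smul, smul_smul,
      mul_comm (m:ℝ)]
  have hbdd : ∃ b ∈ er.G, ∀ n, er.le (f n) b := by
    refine ⟨1, er.one_mem_G, fun n => ?_⟩
    show 1 - f n ∈ er.Epos
    rcases Nat.eq_zero_or_pos n with h0 | hpos
    · subst h0; simpa [hf] using er.one_mem_Epos
    · have hn : (0:ℝ) < n := by exact_mod_cast hpos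
      have h1 := h (1/n) (by positivity)
      have h2 := hscal n (le_of_lt hn) _ h1
      have e : (n:ℝ) • ((1/(n:ℝ)) • (1:R) - c) = 1 - f n := by
        rw [smul_sub, smul_smul]
        field_simp
        simp [hf]
      rwa [e] at h2
  obtain ⟨s, ⟨hsG, hub, hlub⟩, _⟩ := hCV f hfG hasc hcomm hbdd
  have h1 : ∀ n, er.le (f n) (s - c) := by
    intro n
    show (s - c) - f n ∈ er.Epos
    have e : (s - c) - f n = s - f (n + 1) := by
      have := hstep n
      rw [show f (n+1) = f n + c from by rw [← this]; abel]
      abel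
    rw [e]
    exact hub (f (n+1)) ⟨n+1, rfl⟩
  have h2 : er.le s (s - c) :=
    hlub (s - c) (er.sub_mem_G hsG (er.Epos_sub_G hc)) (by rintro x ⟨n, rfl⟩; exact h1 n)
  have h3 : -c ∈ er.Epos := by
    have : (s - c) - s = -c := by abel
    rw [← this]; exact h2
  exact er.epos_i c hc h3

end ERing
section Sqseq

variable {R : Type*} [Ring R] [Algebra ℝ R]

/-- Newton-type iteration for the square root. -/
noncomputable def sqseq (a : R) : ℕ → R
  | 0 => 0
  | n + 1 => sqseq a n + (2:ℝ)⁻¹ • (a - (sqseq a n) ^ 2)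

@[simp] theorem sqseq_zero (a : R) : sqseq a 0 = 0 := rfl

theorem sqseq_succ (a : R) (n : ℕ) :
    sqseq a (n + 1) = sqseq a n + (2:ℝ)⁻¹ • (a - (sqseq a n) ^ 2) := rfl

theorem half_add (x : R) : (2:ℝ)⁻¹ • (x + x) = x := by
  rw [← two_smul ℝ x, smul_smul]; norm_num

end Sqseq

namespace ERing

variable {R : Type*} [Ring R] [Algebra ℝ R] (er : ERing R)

theorem sqseq_props (hscal : ∀ l : ℝ, 0 ≤ l → ∀ a ∈ er.Epos, l • a ∈ er.Epos)
    {a : R} (haG : a ∈ er.G) (h0 : a ∈ er.Epos) (h1 : 1 - a ∈ er.Epos) : ∀ n : ℕ,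
    sqseq a n ∈ er.G ∧ (∀ c : R, c * a = a * c → c * sqseq a n = sqseq a n * c) ∧
    sqseq a n ∈ er.Epos ∧ (1 - sqseq a n) ∈ er.Epos ∧ (a - (sqseq a n) ^ 2) ∈ er.Epos := by
  intro n
  induction n with
  | zero =>
      refine ⟨er.zero_mem_G, by simp, er.zero_mem_Epos, by simpa using er.one_mem_Epos, by
        simpa using h0⟩
  | succ n ih =>
      obtain ⟨hG, hcomm, hpos, hle1, hsq⟩ := ih
      set s := sqseq a n with hsdef
      have has : a * s = s * a := hcomm a rfl
      have has' : ∀ x : R, a * (s * x) = s * (a * x) := fun x => by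
        rw [← mul_assoc, has, mul_assoc]
      have heG : a - s ^ 2 ∈ er.G := er.sub_mem_G haG (er.sq_mem_G hG)
      have hs' : sqseq a (n + 1) = s + (2:ℝ)⁻¹ • (a - s ^ 2) := rfl
      -- commutation
      have hcomm' : ∀ c : R, c * a = a * c → c * sqseq a (n+1) = sqseq a (n+1) * c := by
        intro c hc
        have hcs : c * s = s * c := hcomm c hc
        have hce : c * (a - s^2) = (a - s^2) * c := by
          rw [mul_sub, sub_mul, hc, pow_two, ← mul_assoc, hcs, mul_assoc, hcs, mul_assoc]
        rw [hs', mul_add, add_mul, hcs, mul_smul_comm, smul_mul_assoc, hce]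
      -- membership in G
      have hG' : sqseq a (n + 1) ∈ er.G := by
        rw [hs']
        exact er.add_mem_G hG (er.smul_mem_G hscal _ heG)
      -- nonnegativity
      have hpos' : sqseq a (n + 1) ∈ er.Epos := by
        rw [hs']
        exact er.add_mem_Epos hpos (hscal _ (by norm_num) _ hsq)
      -- ≤ 1
      have hkey : (1 : R) - sqseq a (n+1) = (2:ℝ)⁻¹ • ((1 - s)^2 + (1 - a)) := by
        rw [hs']
        simp only [pow_two, sub_mul, mul_sub, mul_one, one_mul, smul_sub, smul_add]
        module
      have hle1' : (1 : R) - sqseq a (n+1) ∈ er.Epos := by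
        rw [hkey]
        exact hscal _ (by norm_num) _
          (er.add_mem_Epos (er.sq_mem_Epos (er.sub_mem_G er.one_mem_G hG)) h1)
      -- a - s'^2 ≥ 0
      have hiden : a - (sqseq a (n+1))^2
          = (a - s^2) * (1 - sqseq a (n+1)) + ((4:ℝ)⁻¹) • (a - s^2)^2 := by
        rw [hs']
        simp only [pow_two, mul_assoc, sub_mul, mul_sub, add_mul, mul_add, mul_one, one_mul,
          mul_smul_comm, smul_mul_assoc, smul_smul, smul_sub, smul_add, has, has']
        module
      have hes' : (a - s^2) * (1 - sqseq a (n+1)) = (1 - sqseq a (n+1)) * (a - s^2) := by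
        rw [hs']
        simp only [pow_two, mul_assoc, sub_mul, mul_sub, add_mul, mul_add, mul_one, one_mul,
          mul_smul_comm, smul_mul_assoc, smul_smul, smul_sub, smul_add, has, has']
        module
      have hsq' : a - (sqseq a (n+1))^2 ∈ er.Epos := by
        rw [hiden]
        exact er.add_mem_Epos (er.mul_mem_Epos hsq hle1' hes')
          (hscal _ (by norm_num) _ (er.sq_mem_Epos heG))
      exact ⟨hG', hcomm', hpos', hle1', hsq'⟩

theorem sqseq_ascend (hscal : ∀ l : ℝ, 0 ≤ l → ∀ a ∈ er.Epos, l • a ∈ er.Epos)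
    {a : R} (haG : a ∈ er.G) (h0 : a ∈ er.Epos) (h1 : 1 - a ∈ er.Epos) (n : ℕ) :
    er.le (sqseq a n) (sqseq a (n + 1)) := by
  show sqseq a (n+1) - sqseq a n ∈ er.Epos
  rw [sqseq_succ, add_sub_cancel_left]
  exact hscal _ (by norm_num) _ ((er.sqseq_props hscal haG h0 h1 n).2.2.2.2)

theorem sqrt_exists (hCV : er.HasCV)
    (hscal : ∀ l : ℝ, 0 ≤ l → ∀ a ∈ er.Epos, l • a ∈ er.Epos)
    {a : R} (haG : a ∈ er.G) (h0 : a ∈ er.Epos) (h1 : 1 - a ∈ er.Epos) :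
    ∃ s, er.IsSupIn er.G (Set.range (sqseq a)) s ∧ s ∈ er.Epos ∧ s ^ 2 = a ∧
      (∀ c, c ∈ er.G → c * a = a * c → c * s = s * c) := by
  have props := er.sqseq_props hscal haG h0 h1
  have hcomm2 : ∀ m n : ℕ, sqseq a m * sqseq a n = sqseq a n * sqseq a m := fun m n =>
    (props n).2.1 _ (((props m).2.1 a rfl).symm)
  obtain ⟨s, ⟨hsG, hub, hlub⟩, hCCs⟩ := hCV (sqseq a) (fun n => (props n).1)
    (er.sqseq_ascend hscal haG h0 h1) hcomm2
    ⟨1, er.one_mem_G, fun n => (props n).2.2.2.1⟩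
  have hs0 : s ∈ er.Epos := by
    have := hub (sqseq a 0) ⟨0, rfl⟩
    simpa [ERing.le] using this
  have hcommS : ∀ c, c ∈ er.G → c * a = a * c → c * s = s * c := by
    intro c hcG hca
    exact (hCCs.2 c ⟨hcG, by rintro x ⟨n, rfl⟩; exact (props n).2.1 c hca⟩).symm
  have hss : ∀ n, sqseq a n * s = s * sqseq a n :=
    fun n => hcommS _ (props n).1 (((props n).2.1 a rfl).symm)
  have hsle1 : er.le s 1 := hlub 1 er.one_mem_G (by rintro x ⟨n, rfl⟩; exact (props n).2.2.2.1)
  -- key: s ^ 2 = a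
  have hdpos : ∀ n, s - sqseq a n ∈ er.Epos := fun n => hub (sqseq a n) ⟨n, rfl⟩
  have hsqdiff : ∀ n, s^2 - (sqseq a n)^2 ∈ er.Epos := by
    intro n
    have hiden : s^2 - (sqseq a n)^2 = (s - sqseq a n) * (s + sqseq a n) := by
      simp only [pow_two, sub_mul, mul_sub, mul_add, add_mul, hss n]
      module
    have hc : (s - sqseq a n) * (s + sqseq a n) = (s + sqseq a n) * (s - sqseq a n) := by
      simp only [sub_mul, mul_sub, mul_add, add_mul, hss n]
      module
    rw [hiden]
    exact er.mul_mem_Epos (hdpos n) (er.add_mem_Epos hs0 (props n).2.2.1) hc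
  have hsqdiff2 : ∀ n, (2:ℝ) • (s - sqseq a n) - (s^2 - (sqseq a n)^2) ∈ er.Epos := by
    intro n
    have hiden : (2:ℝ) • (s - sqseq a n) - (s^2 - (sqseq a n)^2)
        = (s - sqseq a n) * ((1 - s) + (1 - sqseq a n)) := by
      simp only [pow_two, sub_mul, mul_sub, mul_add, add_mul, mul_one, one_mul, hss n]
      module
    have hc : (s - sqseq a n) * ((1 - s) + (1 - sqseq a n))
        = ((1 - s) + (1 - sqseq a n)) * (s - sqseq a n) := by
      simp only [pow_two, sub_mul, mul_sub, mul_add, add_mul, mul_one, one_mul, hss n]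
      module
    rw [hiden]
    exact er.mul_mem_Epos (hdpos n) (er.add_mem_Epos hsle1 (props n).2.2.2.1) hc
  have hgap : ∀ n, a - (sqseq a n)^2 = (2:ℝ) • (sqseq a (n+1) - sqseq a n) := by
    intro n
    rw [sqseq_succ, add_sub_cancel_left, smul_smul]
    norm_num
  have main : ∀ x, x ∈ er.G → (∀ n, (2:ℝ) • (s - sqseq a n) - x ∈ er.Epos) →
      -((2:ℝ)⁻¹ • x) ∈ er.Epos := by
    intro x hxG hx
    have hub' : ∀ n, er.le (sqseq a n) (s - (2:ℝ)⁻¹ • x) := by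
      intro n
      show (s - (2:ℝ)⁻¹ • x) - sqseq a n ∈ er.Epos
      have hiden : (s - (2:ℝ)⁻¹ • x) - sqseq a n
          = (2:ℝ)⁻¹ • ((2:ℝ) • (s - sqseq a n) - x) := by
        rw [smul_sub, smul_smul]
        norm_num
        module
      rw [hiden]
      exact hscal _ (by norm_num) _ (hx n)
    have := hlub (s - (2:ℝ)⁻¹ • x)
      (er.sub_mem_G hsG (er.smul_mem_G hscal _ hxG)) (by rintro y ⟨n, rfl⟩; exact hub' n)
    have h2 : (s - (2:ℝ)⁻¹ • x) - s = -((2:ℝ)⁻¹ • x) := by abel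
    rw [← h2]; exact this
  have hup : ∀ n, (2:ℝ) • (s - sqseq a n) - (a - s^2) ∈ er.Epos := by
    intro n
    have hiden : (2:ℝ) • (s - sqseq a n) - (a - s^2)
        = (2:ℝ) • (s - sqseq a (n+1)) + (s^2 - (sqseq a n)^2) := by
      linear_combination (norm := module) (-1:ℝ) • hgap n
    rw [hiden]
    exact er.add_mem_Epos (hscal _ (by norm_num) _ (hdpos (n+1))) (hsqdiff n)
  have hdown : ∀ n, (2:ℝ) • (s - sqseq a n) - (-(a - s^2)) ∈ er.Epos := by
    intro n
    have hiden : (2:ℝ) • (s - sqseq a n) - (-(a - s^2))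
        = ((2:ℝ) • (s - sqseq a n) - (s^2 - (sqseq a n)^2)) + (a - (sqseq a n)^2) := by
      abel
    rw [hiden]
    exact er.add_mem_Epos (hsqdiff2 n) (props n).2.2.2.2
  have hxG : a - s^2 ∈ er.G := er.sub_mem_G haG (er.sq_mem_G hsG)
  have m1 := main _ hxG hup
  have m2 := main _ (er.neg_mem_G hxG) hdown
  rw [smul_neg] at m2
  have m2' : (2:ℝ)⁻¹ • (a - s^2) ∈ er.Epos := by rwa [neg_neg] at m2
  have hz := er.epos_i _ m2' m1
  have hfin : a - s^2 = 0 := by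
    have h2 := congrArg (fun y : R => (2:ℝ) • y) hz
    simp only [smul_smul, smul_zero] at h2
    norm_num at h2
    exact h2
  exact ⟨s, ⟨hsG, hub, hlub⟩, hs0, (sub_eq_zero.mp hfin).symm, hcommS⟩

end ERing
namespace ERing

variable {R : Type*} [Ring R] [Algebra ℝ R] (er : ERing R)

theorem eq_of_sq_eq (hQA : er.HasQA) {m t : R} (hmG : m ∈ er.G) (htG : t ∈ er.G)
    (hm0 : m ∈ er.Epos) (ht0 : t ∈ er.Epos) (hcomm : m * t = t * m) (h : m ^ 2 = t ^ 2) :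
    m = t := by
  set u := t - m with hu
  have huG : u ∈ er.G := er.sub_mem_G htG hmG
  have htu : t * u = u * t := by rw [hu]; simp only [mul_sub, sub_mul, hcomm]
  have hmu : m * u = u * m := by rw [hu]; simp only [mul_sub, sub_mul, hcomm]
  have htu' : ∀ x : R, t * (u * x) = u * (t * x) := fun x => by
    rw [← mul_assoc, htu, mul_assoc]
  have hmu' : ∀ x : R, m * (u * x) = u * (m * x) := fun x => by
    rw [← mul_assoc, hmu, mul_assoc]
  have h1 : (t + m) * u = 0 := by
    have e : (t + m) * (t - m) = t^2 - m^2 + (m * t - t * m) := by noncomm_ring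
    rw [hu, e, hcomm, h]
    simp
  have h2 : t * u^2 + m * u^2 = 0 := by
    have e : t * u^2 + m * u^2 = (t + m) * u * u := by noncomm_ring
    rw [e, h1, zero_mul]
  have htu2 : t * u^2 = u^2 * t := by
    simp only [pow_two, mul_assoc, htu, htu']
  have hmu2 : m * u^2 = u^2 * m := by
    simp only [pow_two, mul_assoc, hmu, hmu']
  have hmem1 : t * u^2 ∈ er.Epos := er.mul_mem_Epos ht0 (er.sq_mem_Epos huG) htu2
  have hmem2 : m * u^2 ∈ er.Epos := er.mul_mem_Epos hm0 (er.sq_mem_Epos huG) hmu2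
  obtain ⟨hz1, hz2⟩ := er.eq_of_add_eq_zero_Epos hmem1 hmem2 h2
  have hu3 : u * u^2 = 0 := by
    have e : u * u^2 = t * u^2 - m * u^2 := by rw [hu]; noncomm_ring
    rw [e, hz1, hz2, sub_zero]
  have hu4 : (u^2)^2 = 0 := by
    have e : (u^2)^2 = (u * u^2) * u := by noncomm_ring
    rw [e, hu3, zero_mul]
  have hu2 : u^2 = 0 := er.eq_zero_of_sq_eq_zero hQA (er.sq_mem_G huG) hu4
  have hu0 : u = 0 := er.eq_zero_of_sq_eq_zero hQA huG hu2
  have : t - m = 0 := hu0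
  have h5 : t = m := sub_eq_zero.mp this
  exact h5.symm

theorem abs_comm (hQA : er.HasQA) (hCV : er.HasCV)
    (hscal : ∀ l : ℝ, 0 ≤ l → ∀ a ∈ er.Epos, l • a ∈ er.Epos)
    {m x : R} (hmG : m ∈ er.G) (hxG : x ∈ er.G) (hm0 : m ∈ er.Epos)
    (hsq : m ^ 2 = x ^ 2) : ∀ c, c ∈ er.G → c * x ^ 2 = x ^ 2 * c → c * m = m * c := by
  obtain ⟨n, hn⟩ := er.exists_nat_bound (er.sq_mem_Epos hxG)
  set N : ℝ := (n:ℝ) + 1 with hN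
  have hNpos : 0 < N := by positivity
  have hbd : N • (1:R) - x^2 ∈ er.Epos := by
    have e : N • (1:R) - x^2 = 1 + ((n:ℝ) • (1:R) - x^2) := by
      rw [hN, add_smul, one_smul]; abel
    rw [e]; exact er.add_mem_Epos er.one_mem_Epos hn
  set a : R := N⁻¹ • x^2 with ha
  have haG : a ∈ er.G := er.smul_mem_G hscal _ (er.sq_mem_G hxG)
  have ha0 : a ∈ er.Epos := hscal _ (by positivity) _ (er.sq_mem_Epos hxG)
  have ha1 : 1 - a ∈ er.Epos := by
    have e : 1 - a = N⁻¹ • (N • (1:R) - x^2) := by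
      rw [smul_sub, smul_smul, inv_mul_cancel₀ (ne_of_gt hNpos), one_smul, ha]
    rw [e]; exact hscal _ (by positivity) _ hbd
  obtain ⟨s, hsup, hs0, hssq, hscomm⟩ := er.sqrt_exists hCV hscal haG ha0 ha1
  have hsG : s ∈ er.G := hsup.1
  set t : R := Real.sqrt N • s with ht
  have htsq : t^2 = x^2 := by
    rw [ht, pow_two, smul_mul_assoc, mul_smul_comm, smul_smul, Real.mul_self_sqrt hNpos.le,
      ← pow_two, hssq, ha, smul_smul, mul_inv_cancel₀ (ne_of_gt hNpos), one_smul]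
  have hmx2 : m * x^2 = x^2 * m := by
    rw [← hsq]
    noncomm_ring
  have hma : m * a = a * m := by rw [ha, mul_smul_comm, smul_mul_assoc, hmx2]
  have hms : m * s = s * m := hscomm m hmG hma
  have hmt : m * t = t * m := by rw [ht, mul_smul_comm, smul_mul_assoc, hms]
  have htG : t ∈ er.G := er.smul_mem_G hscal _ hsG
  have ht0 : t ∈ er.Epos := hscal _ (Real.sqrt_nonneg _) _ hs0
  have hmeq : m = t := er.eq_of_sq_eq hQA hmG htG hm0 ht0 hmt (by rw [htsq, hsq])
  intro c hcG hcx
  have hca : c * a = a * c := by rw [ha, mul_smul_comm, smul_mul_assoc, hcx]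
  have hcs := hscomm c hcG hca
  rw [hmeq, ht, mul_smul_comm, smul_mul_assoc, hcs]

theorem sqseq_mono (hscal : ∀ l : ℝ, 0 ≤ l → ∀ a ∈ er.Epos, l • a ∈ er.Epos)
    {a b : R} (haG : a ∈ er.G) (hbG : b ∈ er.G)
    (ha0 : a ∈ er.Epos) (hab : b - a ∈ er.Epos) (hb1 : 1 - b ∈ er.Epos)
    (hcab : a * b = b * a) :
    ∀ n, sqseq b n - sqseq a n ∈ er.Epos := by
  have ha1 : 1 - a ∈ er.Epos := by
    have e : (1:R) - a = (1 - b) + (b - a) := by abel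
    rw [e]; exact er.add_mem_Epos hb1 hab
  have hb0 : b ∈ er.Epos := by
    have e : b = a + (b - a) := by abel
    rw [e]; exact er.add_mem_Epos ha0 hab
  have pa := er.sqseq_props hscal haG ha0 ha1
  have pb := er.sqseq_props hscal hbG hb0 hb1
  intro n
  induction n with
  | zero => simpa using er.zero_mem_Epos
  | succ n ih =>
      set sa := sqseq a n with hsa
      set sb := sqseq b n with hsb
      have hbsb : sb * a = a * sb := ((pb n).2.1 a hcab).symm
      have hsasb : sa * sb = sb * sa := ((pa n).2.1 sb hbsb).symm
      have h2 : (2:ℝ) • (sqseq b (n+1) - sqseq a (n+1))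
          = (sb - sa) * ((1 - sb) + (1 - sa)) + (b - a) := by
        rw [sqseq_succ b n, sqseq_succ a n, ← hsa, ← hsb]
        simp only [pow_two, sub_mul, mul_sub, add_mul, mul_add, mul_one, one_mul,
          smul_sub, smul_add, hsasb]
        module
      have hcXY : (sb - sa) * ((1 - sb) + (1 - sa)) = ((1 - sb) + (1 - sa)) * (sb - sa) := by
        simp only [sub_mul, mul_sub, add_mul, mul_add, mul_one, one_mul, hsasb]
        module
      have hmemX : (sb - sa) * ((1 - sb) + (1 - sa)) ∈ er.Epos :=
        er.mul_mem_Epos ih (er.add_mem_Epos (pb n).2.2.2.1 (pa n).2.2.2.1) hcXY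
      have hfin : sqseq b (n+1) - sqseq a (n+1)
          = (2:ℝ)⁻¹ • ((sb - sa) * ((1 - sb) + (1 - sa)) + (b - a)) := by
        linear_combination (norm := module) ((2:ℝ)⁻¹) • h2
      rw [hfin]
      exact hscal _ (by norm_num) _ (er.add_mem_Epos hmemX hab)

theorem sqrt_le (hQA : er.HasQA) (hCV : er.HasCV)
    (hscal : ∀ l : ℝ, 0 ≤ l → ∀ a ∈ er.Epos, l • a ∈ er.Epos)
    {m z : R} (hmG : m ∈ er.G) (hzG : z ∈ er.G) (hm0 : m ∈ er.Epos) (hz0 : z ∈ er.Epos)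
    (hcomm : m * z = z * m) (hsq : z ^ 2 - m ^ 2 ∈ er.Epos) : z - m ∈ er.Epos := by
  obtain ⟨n, hn⟩ := er.exists_nat_bound (er.sq_mem_Epos hzG)
  set N : ℝ := (n:ℝ) + 1 with hN
  have hNpos : 0 < N := by positivity
  have hbz : N • (1:R) - z^2 ∈ er.Epos := by
    have e : N • (1:R) - z^2 = 1 + ((n:ℝ) • (1:R) - z^2) := by
      rw [hN, add_smul, one_smul]; abel
    rw [e]; exact er.add_mem_Epos er.one_mem_Epos hn
  have hbm : N • (1:R) - m^2 ∈ er.Epos := by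
    have e : N • (1:R) - m^2 = (N • (1:R) - z^2) + (z^2 - m^2) := by abel
    rw [e]; exact er.add_mem_Epos hbz hsq
  set a : R := N⁻¹ • m^2 with ha
  set b : R := N⁻¹ • z^2 with hb
  have haG : a ∈ er.G := er.smul_mem_G hscal _ (er.sq_mem_G hmG)
  have hbG : b ∈ er.G := er.smul_mem_G hscal _ (er.sq_mem_G hzG)
  have ha0 : a ∈ er.Epos := hscal _ (by positivity) _ (er.sq_mem_Epos hmG)
  have hb0 : b ∈ er.Epos := hscal _ (by positivity) _ (er.sq_mem_Epos hzG)
  have hb1 : 1 - b ∈ er.Epos := by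
    have e : 1 - b = N⁻¹ • (N • (1:R) - z^2) := by
      rw [smul_sub, smul_smul, inv_mul_cancel₀ (ne_of_gt hNpos), one_smul, hb]
    rw [e]; exact hscal _ (by positivity) _ hbz
  have ha1 : 1 - a ∈ er.Epos := by
    have e : 1 - a = N⁻¹ • (N • (1:R) - m^2) := by
      rw [smul_sub, smul_smul, inv_mul_cancel₀ (ne_of_gt hNpos), one_smul, ha]
    rw [e]; exact hscal _ (by positivity) _ hbm
  have hab : b - a ∈ er.Epos := by
    have e : b - a = N⁻¹ • (z^2 - m^2) := by rw [smul_sub, ha, hb]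
    rw [e]; exact hscal _ (by positivity) _ hsq
  have hmz' : ∀ x : R, m * (z * x) = z * (m * x) := fun x => by
    rw [← mul_assoc, hcomm, mul_assoc]
  have hm2z2 : m^2 * z^2 = z^2 * m^2 := by
    simp only [pow_two, mul_assoc, hcomm, hmz']
  have hcab : a * b = b * a := by
    rw [ha, hb, mul_smul_comm, smul_mul_assoc, mul_smul_comm, smul_mul_assoc, hm2z2]
  obtain ⟨sa, hsupa, hsa0, hsasq, hsacomm⟩ := er.sqrt_exists hCV hscal haG ha0 ha1
  obtain ⟨sb, hsupb, hsb0, hsbsq, hsbcomm⟩ := er.sqrt_exists hCV hscal hbG hb0 hb1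
  have hmono := er.sqseq_mono hscal haG hbG ha0 hab hb1 hcab
  have hle : er.le sa sb := by
    refine hsupa.2.2 sb hsupb.1 ?_
    rintro y ⟨k, rfl⟩
    show sb - sqseq a k ∈ er.Epos
    have e : sb - sqseq a k = (sb - sqseq b k) + (sqseq b k - sqseq a k) := by abel
    rw [e]
    exact er.add_mem_Epos (hsupb.2.1 (sqseq b k) ⟨k, rfl⟩) (hmono k)
  -- identify m and z with the scaled square roots
  have hident : ∀ (w : R) (c : R), w ∈ er.G → w ∈ er.Epos → c ∈ er.G → c ∈ er.Epos →
      c^2 = N⁻¹ • w^2 → (∀ d, d ∈ er.G → d * (N⁻¹ • w^2) = (N⁻¹ • w^2) * d → d * c = c * d) →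
      w = Real.sqrt N • c := by
    intro w c hwG hw0 hcG hc0 hcsq hccomm
    have hwa : w * (N⁻¹ • w^2) = (N⁻¹ • w^2) * w := by
      rw [mul_smul_comm, smul_mul_assoc]
      congr 1
      noncomm_ring
    have hwc : w * c = c * w := hccomm w hwG hwa
    have htG : Real.sqrt N • c ∈ er.G := er.smul_mem_G hscal _ hcG
    have ht0 : Real.sqrt N • c ∈ er.Epos := hscal _ (Real.sqrt_nonneg _) _ hc0
    have hwt : w * (Real.sqrt N • c) = (Real.sqrt N • c) * w := by
      rw [mul_smul_comm, smul_mul_assoc, hwc]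
    have htsq : (Real.sqrt N • c)^2 = w^2 := by
      rw [pow_two, smul_mul_assoc, mul_smul_comm, smul_smul, Real.mul_self_sqrt hNpos.le,
        ← pow_two, hcsq, smul_smul, mul_inv_cancel₀ (ne_of_gt hNpos), one_smul]
    exact er.eq_of_sq_eq hQA hwG htG hw0 ht0 hwt htsq.symm
  have hmeq : m = Real.sqrt N • sa := by
    refine hident m sa hmG hm0 hsupa.1 hsa0 (by rw [hsasq, ha]) ?_
    intro d hdG hd
    exact hsacomm d hdG (by rw [← ha] at hd; exact hd)
  have hzeq : z = Real.sqrt N • sb := by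
    refine hident z sb hzG hz0 hsupb.1 hsb0 (by rw [hsbsq, hb]) ?_
    intro d hdG hd
    exact hsbcomm d hdG (by rw [← hb] at hd; exact hd)
  have e : z - m = Real.sqrt N • (sb - sa) := by rw [hmeq, hzeq, smul_sub]
  rw [e]
  exact hscal _ (Real.sqrt_nonneg _) _ hle

end ERing
namespace ERing

variable {R : Type*} [Ring R] (er : ERing R)

theorem nonneg_iff {m : R} : er.le 0 m ↔ m ∈ er.Epos := by
  rw [ERing.le, sub_zero]

theorem proj_mem_G {q : R} (hq : q ∈ er.P) : q ∈ er.G := hq.1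

theorem proj_mem_Epos {q : R} (hq : q ∈ er.P) : q ∈ er.Epos := by
  rw [hq.2]; exact er.sq_mem_Epos hq.1

theorem proj_compl {q : R} (hq : q ∈ er.P) : (1 - q) ∈ er.P := by
  refine ⟨er.sub_mem_G er.one_mem_G hq.1, ?_⟩
  have e : ((1:R) - q)^2 = 1 - q - q + q^2 := by noncomm_ring
  rw [e, ← hq.2]
  abel

theorem proj_compl_Epos {q : R} (hq : q ∈ er.P) : (1 - q) ∈ er.Epos :=
  er.proj_mem_Epos (er.proj_compl hq)

theorem proj_sub_mem {q r : R} (hq : q ∈ er.P) (hr : r ∈ er.P) (h1 : q * r = r)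
    (h2 : r * q = r) : q - r ∈ er.Epos := by
  have e : q * (1 - r) * q = q - r := by
    rw [mul_sub, mul_one, h1, sub_mul, h2, ← pow_two, ← hq.2]
  rw [← e]
  exact er.conj_mem_Epos (er.proj_mem_Epos hq) (er.proj_compl_Epos hr)

theorem proj_le_orth (hQA : er.HasQA) {b p : R} (hb : b ∈ er.P) (hp : p ∈ er.P)
    (h : er.le b p) : (1 - p) * b = 0 ∧ b * (1 - p) = 0 := by
  have hrE : (1 - p) ∈ er.Epos := er.proj_compl_Epos hp
  have hbE : b ∈ er.Epos := er.proj_mem_Epos hb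
  have e0 : (1 - p) * p = 0 := by
    rw [sub_mul, one_mul, ← pow_two, ← hp.2, sub_self]
  have h2 : (1 - p) * (p - b) * (1 - p) ∈ er.Epos := er.conj_mem_Epos hrE h
  have e2 : (1 - p) * (p - b) * (1 - p) = -((1 - p) * b * (1 - p)) := by
    rw [mul_sub ((1:R)-p) p b, e0, zero_sub, neg_mul]
  have h3 : (1 - p) * b * (1 - p) ∈ er.Epos := er.conj_mem_Epos hrE hbE
  have h4 : (1 - p) * b * (1 - p) = 0 := er.epos_i _ h3 (by rw [← e2]; exact h2)
  exact er.epos_v (1 - p) hrE b hbE h4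

theorem comm_sq {c x : R} (h : c * x = x * c) : c * x^2 = x^2 * c := by
  rw [pow_two, ← mul_assoc, h, mul_assoc, h, ← mul_assoc]

end ERing

namespace ERing

variable {R : Type*} [Ring R] [Algebra ℝ R] (er : ERing R)

theorem comm_smul_one (c : R) (l : ℝ) : c * (l • (1:R)) = (l • (1:R)) * c := by
  rw [mul_smul_comm, smul_mul_assoc, mul_one, one_mul]

theorem comm_shift {c g : R} (h : c * g = g * c) (l : ℝ) :
    c * (g - l • (1:R)) = (g - l • (1:R)) * c := by
  rw [mul_sub, sub_mul, h, comm_smul_one]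

theorem spec_data (hQA : er.HasQA) (hCV : er.HasCV)
    (hscal : ∀ l : ℝ, 0 ≤ l → ∀ a ∈ er.Epos, l • a ∈ er.Epos)
    {g : R} (hg : g ∈ er.G) (l : ℝ) {pl : R} (hpl : er.IsSpecProj g l pl) :
    ∃ a m q : R, a ∈ er.G ∧ m ∈ er.G ∧ q ∈ er.P ∧ a ∈ er.Epos ∧ m ∈ er.Epos ∧
      m - a ∈ er.Epos ∧ m^2 = (g - l•(1:R))^2 ∧ a + a = m + (g - l•(1:R)) ∧
      (∀ h ∈ er.G, (a*h = 0 ↔ q*h = 0)) ∧ pl = 1 - q ∧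
      (∀ c, c ∈ er.G → c * g = g * c → c * m = m * c) := by
  obtain ⟨a, ⟨haG, m, ⟨hmG, hm0, hmsq⟩, haa⟩, q, ⟨hqP, hqcar⟩, hpeq⟩ := hpl
  set x : R := g - l • (1:R) with hx
  have hxG : x ∈ er.G := er.sub_mem_G hg (er.smul_mem_G hscal l er.one_mem_G)
  have hmE : m ∈ er.Epos := er.nonneg_iff.mp hm0
  have hqG : q ∈ er.G := hqP.1
  -- commutation of m with everything commuting with g
  have hcommfull : ∀ c, c ∈ er.G → c * g = g * c → c * m = m * c := by
    intro c hcG hcg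
    exact er.abs_comm hQA hCV hscal hmG hxG hmE hmsq c hcG
      (comm_sq (comm_shift hcg l))
  have hmg : m * g = g * m :=
    (er.abs_comm hQA hCV hscal hmG hxG hmE hmsq g hg (comm_sq (comm_shift rfl l))).symm
  have hmx : m * x = x * m := comm_shift hmg l
  -- b := m - a ; a * b = 0
  have hbb : (m - a) + (m - a) = m - x := by
    linear_combination (norm := module) (-1:ℝ) • haa
  have hprod : (a + a) * ((m - a) + (m - a)) = 0 := by
    rw [haa, hbb]
    have e : (m + x) * (m - x) = m^2 - x^2 + (x*m - m*x) := by noncomm_ring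
    rw [e, hmsq, hmx]
    simp
  have hab : a * (m - a) = 0 := by
    have e4 : (a + a) * ((m - a) + (m - a))
        = a*(m-a) + a*(m-a) + a*(m-a) + a*(m-a) := by noncomm_ring
    rw [e4] at hprod
    have e5 : a*(m-a) = (4:ℝ)⁻¹ • (a*(m-a) + a*(m-a) + a*(m-a) + a*(m-a)) := by
      module
    rw [e5, hprod, smul_zero]
  have hbG : m - a ∈ er.G := er.sub_mem_G hmG haG
  have hba : (m - a) * a = 0 := er.flip_zero hQA haG hbG hab
  have hqb : q * (m - a) = 0 := (hqcar _ hbG).mp hab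
  have hbq : (m - a) * q = 0 := er.flip_zero hQA hqG hbG hqb
  -- a * q = a, q * a = a
  have haq : a * (1 - q) = 0 := by
    refine (hqcar _ (er.sub_mem_G er.one_mem_G hqG)).mpr ?_
    rw [mul_sub, mul_one, ← pow_two, ← hqP.2, sub_self]
  have haq' : a * q = a := by
    rw [mul_sub, mul_one] at haq
    exact (sub_eq_zero.mp haq).symm
  have hqa : q * a = a := by
    have h6 : (1 - q) * a = 0 := by
      refine er.flip_zero hQA haG (er.sub_mem_G er.one_mem_G hqG) ?_
      rw [mul_sub, mul_one, haq', sub_self]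
    rw [sub_mul, one_mul] at h6
    exact (sub_eq_zero.mp h6).symm
  have hqm : q * m = a := by
    have e : q * m = q * a + q * (m - a) := by rw [← mul_add]; congr 1; abel
    rw [e, hqa, hqb, add_zero]
  have haE : a ∈ er.Epos := by
    have e : q * m * q = a := by rw [hqm, haq']
    rw [← e]; exact er.conj_mem_Epos (er.proj_mem_Epos hqP) hmE
  have hbE : m - a ∈ er.Epos := by
    have e1 : (1 - q) * m = m - a := by rw [sub_mul, one_mul, hqm]
    have e2 : (m - a) * (1 - q) = m - a := by rw [mul_sub, mul_one, hbq, sub_zero]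
    have e : (1 - q) * m * (1 - q) = m - a := by rw [e1, e2]
    rw [← e]; exact er.conj_mem_Epos (er.proj_compl_Epos hqP) hmE
  exact ⟨a, m, q, haG, hmG, hqP, haE, hmE, hbE, hmsq, haa, hqcar, hpeq, hcommfull⟩

end ERing
/-- In an AH-algebra (with real scalars), for every `α ∈ ℝ` the
spectral projection `p_α` is the infimum in `P` of `{p_μ : α < μ}`. -/
theorem stmt19 {R : Type*} [Ring R] [Algebra ℝ R] (er : ERing R) (hAH : er.IsAH)
    (hscal : ∀ l : ℝ, 0 ≤ l → ∀ a ∈ er.Epos, l • a ∈ er.Epos)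
    (g : R) (hg : g ∈ er.G) (p : ℝ → R)
    (hp : ∀ l : ℝ, er.IsSpecProj g l (p l)) (α : ℝ) :
    er.IsInfIn er.P {x | ∃ mu : ℝ, α < mu ∧ x = p mu} (p α) := by
  obtain ⟨-, hQA, hCV⟩ := hAH
  obtain ⟨a1, m1, q1, ha1G, hm1G, hq1P, ha1E, hm1E, hb1E, hm1sq, haa1, hcar1, hpeq1, hcomm1⟩ :=
    er.spec_data hQA hCV hscal hg α (hp α)
  have hhG : (1:R) - q1 ∈ er.G := er.sub_mem_G er.one_mem_G hq1P.1
  have ha1h : a1 * (1 - q1) = 0 :=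
    (hcar1 _ hhG).mpr (by rw [mul_sub, mul_one, ← pow_two, ← hq1P.2, sub_self])
  have hha1 : (1 - q1) * a1 = 0 := er.flip_zero hQA ha1G hhG ha1h
  refine ⟨by rw [hpeq1]; exact er.proj_compl hq1P, ?_, ?_⟩
  · -- p α is a lower bound
    rintro x ⟨μ, hμ, rfl⟩
    obtain ⟨a2, m2, q2, ha2G, hm2G, hq2P, ha2E, hm2E, hb2E, hm2sq, haa2, hcar2, hpeq2, hcomm2⟩ :=
      er.spec_data hQA hCV hscal hg μ (hp μ)
    have hm2g : g * m2 = m2 * g := hcomm2 g hg rfl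
    have hm21 : m2 * m1 = m1 * m2 := hcomm1 m2 hm2G hm2g.symm
    have hxrel : (g - α•(1:R)) = (g - μ•(1:R)) + (μ - α)•(1:R) := by
      rw [sub_smul]; abel
    have hm1m2' : m2 * (m1 + (μ-α)•(1:R)) = (m1 + (μ-α)•(1:R)) * m2 := by
      rw [mul_add, add_mul, hm21, ERing.comm_smul_one]
    have hmm : m1 * m1 = (g - α•(1:R)) * (g - α•(1:R)) := by
      have h' := hm1sq; rw [pow_two, pow_two] at h'; exact h'
    have hzsq : (m1 + (μ-α)•(1:R))^2 - m2^2 = (2*(μ-α))•(a1 + a1) := by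
      rw [hm2sq, haa1, hxrel]
      simp only [pow_two, sub_mul, mul_sub, add_mul, mul_add, mul_one, one_mul,
        mul_smul_comm, smul_mul_assoc, smul_smul, smul_sub, smul_add, hmm]
      module
    have hz : (m1 + (μ-α)•(1:R)) - m2 ∈ er.Epos := by
      refine er.sqrt_le hQA hCV hscal hm2G
        (er.add_mem_G hm1G (er.smul_mem_G hscal _ er.one_mem_G)) hm2E
        (er.add_mem_Epos hm1E (hscal _ (by linarith) _ er.one_mem_Epos)) hm1m2' ?_
      rw [hzsq]
      exact hscal _ (by linarith) _ (er.add_mem_Epos ha1E ha1E)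
    have hsum : (a2 + a2) + ((m1 + (μ-α)•(1:R)) - m2) = a1 + a1 := by
      rw [haa1, haa2, hxrel]; abel
    have hr : ((1:R) - q1) * (a1 + a1) * (1 - q1) = 0 := by
      rw [mul_add ((1:R)-q1) a1 a1, hha1, add_zero, zero_mul]
    have hzero : (((1:R)-q1)*a2*(1-q1) + ((1:R)-q1)*a2*(1-q1))
        + ((1:R)-q1)*((m1 + (μ-α)•(1:R)) - m2)*(1-q1) = 0 := by
      have e : (((1:R)-q1)*a2*(1-q1) + ((1:R)-q1)*a2*(1-q1))
          + ((1:R)-q1)*((m1 + (μ-α)•(1:R)) - m2)*(1-q1)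
          = ((1:R)-q1)*((a2 + a2) + ((m1 + (μ-α)•(1:R)) - m2))*(1-q1) := by noncomm_ring
      rw [e, hsum, hr]
    have hq1E := er.proj_compl_Epos hq1P
    have hu1 : ((1:R)-q1)*a2*(1-q1) ∈ er.Epos := er.conj_mem_Epos hq1E ha2E
    have hu2 : ((1:R)-q1)*((m1 + (μ-α)•(1:R)) - m2)*(1-q1) ∈ er.Epos :=
      er.conj_mem_Epos hq1E hz
    obtain ⟨h12, -⟩ := er.eq_of_add_eq_zero_Epos (er.add_mem_Epos hu1 hu1) hu2 hzero
    obtain ⟨hu0, -⟩ := er.eq_of_add_eq_zero_Epos hu1 hu1 h12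
    obtain ⟨hha2, ha2h⟩ := er.epos_v _ hq1E a2 ha2E hu0
    have hq2h : q2 * (1 - q1) = 0 := (hcar2 _ hhG).mp ha2h
    have hhq2 : ((1:R) - q1) * q2 = 0 := er.flip_zero hQA hq2P.1 hhG hq2h
    have hq2q1 : q2 * q1 = q2 := by
      rw [mul_sub, mul_one] at hq2h
      exact (sub_eq_zero.mp hq2h).symm
    have hq1q2 : q1 * q2 = q2 := by
      rw [sub_mul, one_mul] at hhq2
      exact (sub_eq_zero.mp hhq2).symm
    have hfin : q1 - q2 ∈ er.Epos := er.proj_sub_mem hq1P hq2P hq1q2 hq2q1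
    show p μ - p α ∈ er.Epos
    rw [hpeq1, hpeq2, show ((1:R) - q2) - (1 - q1) = q1 - q2 from by abel]
    exact hfin
  · -- p α is the greatest lower bound
    intro b hbP hub
    have hbG : b ∈ er.G := hbP.1
    have hbE : b ∈ er.Epos := er.proj_mem_Epos hbP
    have hc : b*a1*b ∈ er.Epos := er.conj_mem_Epos hbE ha1E
    have key : ∀ ε : ℝ, 0 < ε → er.le (b*a1*b + b*a1*b) (ε • (1:R)) := by
      intro ε hε
      have hμ : α < α + ε/2 := by linarith
      obtain ⟨a2, m2, q2, ha2G, hm2G, hq2P, ha2E, hm2E, hb2E, hm2sq, haa2, hcar2, hpeq2,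
        hcomm2⟩ := er.spec_data hQA hCV hscal hg (α + ε/2) (hp (α + ε/2))
      have hm2g : g * m2 = m2 * g := hcomm2 g hg rfl
      have hm21 : m2 * m1 = m1 * m2 := hcomm1 m2 hm2G hm2g.symm
      have hxrel : (g - α•(1:R)) = (g - (α + ε/2)•(1:R)) + ((α + ε/2) - α)•(1:R) := by
        rw [sub_smul]; abel
      -- orthogonality of b to the data at μ
      have hble : er.le b (p (α + ε/2)) := hub (p (α + ε/2)) ⟨α + ε/2, hμ, rfl⟩
      have hpμP : p (α + ε/2) ∈ er.P := by rw [hpeq2]; exact er.proj_compl hq2P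
      obtain ⟨ho1, ho2⟩ := er.proj_le_orth hQA hbP hpμP hble
      have heq : (1:R) - p (α + ε/2) = q2 := by rw [hpeq2, sub_sub_cancel]
      rw [heq] at ho1 ho2
      have ha2b : a2 * b = 0 := (hcar2 b hbG).mpr ho1
      have hba2 : b * a2 = 0 := er.flip_zero hQA ha2G hbG ha2b
      -- the mirror bound w := (m2 + δ•1) - m1 ≥ 0
      have hm1m2'' : m1 * (m2 + ((α + ε/2) - α)•(1:R)) = (m2 + ((α + ε/2) - α)•(1:R)) * m1 := by
        rw [mul_add, add_mul, hm21, ERing.comm_smul_one]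
      have hmm2 : m2 * m2 = (g - (α + ε/2)•(1:R)) * (g - (α + ε/2)•(1:R)) := by
        have h' := hm2sq; rw [pow_two, pow_two] at h'; exact h'
      have hbb2 : (m2 - a2) + (m2 - a2) = m2 - (g - (α + ε/2)•(1:R)) := by
        linear_combination (norm := module) (-1:ℝ) • haa2
      have hwsq : (m2 + ((α + ε/2) - α)•(1:R))^2 - m1^2
          = (2*((α + ε/2) - α))•(m2 - (g - (α + ε/2)•(1:R))) := by
        rw [hm1sq, hxrel]
        simp only [pow_two, sub_mul, mul_sub, add_mul, mul_add, mul_one, one_mul,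
          mul_smul_comm, smul_mul_assoc, smul_smul, smul_sub, smul_add, hmm2]
        module
      have hw : (m2 + ((α + ε/2) - α)•(1:R)) - m1 ∈ er.Epos := by
        refine er.sqrt_le hQA hCV hscal hm1G
          (er.add_mem_G hm2G (er.smul_mem_G hscal _ er.one_mem_G)) hm1E
          (er.add_mem_Epos hm2E (hscal _ (by linarith) _ er.one_mem_Epos)) hm1m2'' ?_
        rw [hwsq, ← hbb2]
        exact hscal _ (by linarith) _ (er.add_mem_Epos hb2E hb2E)
      -- b z b = c + c
      have hbzb : b * ((m1 + ((α + ε/2)-α)•(1:R)) - m2) * b = b*a1*b + b*a1*b := by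
        rw [show (m1 + ((α + ε/2)-α)•(1:R)) - m2 = (a1 + a1) - (a2 + a2) from by
          rw [haa1, haa2, hxrel]; abel]
        simp only [mul_sub, sub_mul, mul_add, add_mul, hba2, zero_mul, mul_zero,
          sub_zero, add_zero, zero_add]
      -- z + w = ε • 1
      have hzw : (((m1 + ((α + ε/2)-α)•(1:R))) - m2) + ((m2 + ((α + ε/2) - α)•(1:R)) - m1)
          = ε • (1:R) := by
        have e : (((m1 + ((α + ε/2)-α)•(1:R))) - m2) + ((m2 + ((α + ε/2) - α)•(1:R)) - m1)
            = ((α + ε/2)-α)•(1:R) + ((α + ε/2)-α)•(1:R) := by abel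
        rw [e, ← add_smul]
        congr 1
        ring
      have e2 : b*((((m1 + ((α + ε/2)-α)•(1:R))) - m2)
          + ((m2 + ((α + ε/2) - α)•(1:R)) - m1))*b = ε•b := by
        rw [hzw, mul_smul_comm, mul_one, smul_mul_assoc, ← pow_two, ← hbP.2]
      have e3 : b*((m1 + ((α + ε/2)-α)•(1:R)) - m2)*b
          + b*((m2 + ((α + ε/2) - α)•(1:R)) - m1)*b = ε•b := by
        rw [← e2]; noncomm_ring
      show ε•(1:R) - (b*a1*b + b*a1*b) ∈ er.Epos
      have e4 : ε•(1:R) - (b*a1*b + b*a1*b)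
          = ε•((1:R) - b) + b*((m2 + ((α + ε/2) - α)•(1:R)) - m1)*b := by
        rw [← hbzb]
        linear_combination (norm := module) (-1:ℝ) • e3
      rw [e4]
      refine er.add_mem_Epos ?_ (er.conj_mem_Epos hbE hw)
      exact hscal ε hε.le _ (er.proj_compl_Epos hbP)
    -- archimedean property kills c + c
    have hccz : b*a1*b + b*a1*b = 0 := er.arch hCV hscal (er.add_mem_Epos hc hc) key
    obtain ⟨hcz, -⟩ := er.eq_of_add_eq_zero_Epos hc hc hccz
    obtain ⟨hba1, ha1b⟩ := er.epos_v b hbE a1 ha1E hcz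
    have hq1b : q1 * b = 0 := (hcar1 b hbG).mp ha1b
    have hbq1 : b * q1 = 0 := er.flip_zero hQA hq1P.1 hbG hq1b
    have h1 : ((1:R) - q1) * b = b := by rw [sub_mul, one_mul, hq1b, sub_zero]
    have h2 : b * ((1:R) - q1) = b := by rw [mul_sub, mul_one, hbq1, sub_zero]
    have hfin := er.proj_sub_mem (er.proj_compl hq1P) hbP h1 h2
    show p α - b ∈ er.Epos
    rw [hpeq1]
    exact hfin
end
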